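/- arXiv:1410.5106 — 5 statements merged into one kernel-verified Lean document; each statement's English description precedes it below -/
import Mathlib

section
/- Let q be a prime and α₁, α₂ positive integers. Suppose B₁, B₂, C₁, C₂ are integers with q^{α₁}·C₂ + B₁·B₂ + q^{α₂}·C₁ ≡ 0 (mod q^{α₁+α₂}), gcd(B₁, C₁, q) = 1 and gcd(B₂, C₂, q) = 1, and B₁, B₂ nonzero. Then v_q(B₁) ≤ α₂ and v_q(B₂) ≤ α₁, where v_q denotes the q-adic valuation. -/
private lemma key_aux (q : ℕ) (hq : q.Prime) (α₁ α₂ : ℕ) (hα₁ : 1 ≤ α₁) (hα₂ : 1 ≤ α₂)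
    (B₁ B₂ C₁ C₂ : ℤ)
    (hB₁lb : 1 ≤ B₁) (hB₁ub : B₁ ≤ (q : ℤ) ^ α₁)
    (hB₁0 : B₁ ≠ 0)
    (hcong : ((q : ℤ) ^ (α₁ + α₂)) ∣ ((q : ℤ) ^ α₁ * C₂ + B₁ * B₂ + (q : ℤ) ^ α₂ * C₁))
    (hgcd₁ : Int.gcd B₁ ((Int.gcd C₁ (q : ℤ) : ℕ) : ℤ) = 1) :
    padicValInt q B₁ ≤ α₂ := by
  haveI : Fact q.Prime := ⟨hq⟩
  by_contra h
  push_neg at h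
  have hdvd : (q : ℤ) ^ (α₂ + 1) ∣ B₁ := by
    rw [padicValInt_dvd_iff]
    exact Or.inr h
  have hq1 : (1 : ℤ) < q := by exact_mod_cast hq.one_lt
  rcases le_or_gt α₁ α₂ with hle | hlt
  · -- size contradiction
    have h1 : (q : ℤ) ^ (α₂ + 1) ≤ B₁ := Int.le_of_dvd (by linarith) hdvd
    have h2 : (q : ℤ) ^ α₁ ≤ (q : ℤ) ^ α₂ := pow_le_pow_right₀ (by linarith) hle
    have h3 : (q : ℤ) ^ α₂ < (q : ℤ) ^ (α₂ + 1) := pow_lt_pow_right₀ hq1 (Nat.lt_succ_self _)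
    linarith
  · -- q ∣ C₁ and q ∣ B₁ contradicts gcd condition
    have hdvdsum : (q : ℤ) ^ (α₂ + 1) ∣ ((q : ℤ) ^ α₁ * C₂ + B₁ * B₂ + (q : ℤ) ^ α₂ * C₁) :=
      dvd_trans (pow_dvd_pow _ (by omega)) hcong
    have h1 : (q : ℤ) ^ (α₂ + 1) ∣ (q : ℤ) ^ α₁ * C₂ :=
      Dvd.dvd.mul_right (pow_dvd_pow _ (by omega)) _
    have h2 : (q : ℤ) ^ (α₂ + 1) ∣ B₁ * B₂ := hdvd.mul_right _
    have h3 : (q : ℤ) ^ (α₂ + 1) ∣ (q : ℤ) ^ α₂ * C₁ := by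
      have : (q : ℤ) ^ (α₂ + 1) ∣ _ := (dvd_sub (dvd_sub hdvdsum h2) h1)
      convert this using 1; ring
    have hq0 : (q : ℤ) ≠ 0 := by positivity
    have hqC₁ : (q : ℤ) ∣ C₁ := by
      rw [pow_succ] at h3
      exact (mul_dvd_mul_iff_left (pow_ne_zero α₂ hq0)).mp h3
    have hqB₁ : (q : ℤ) ∣ B₁ := dvd_trans (dvd_pow_self _ (Nat.succ_ne_zero α₂)) hdvd
    have hgcdCq : Int.gcd C₁ (q : ℤ) = q := by
      have h4 : q ∣ Int.gcd C₁ (q : ℤ) := by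
        rw [← Int.natCast_dvd_natCast]
        exact Int.natCast_dvd_natCast.mpr (Int.dvd_gcd hqC₁ dvd_rfl)
      have h5 : Int.gcd C₁ (q : ℤ) ∣ q := by
        have := Int.gcd_dvd_right (a := C₁) (b := (q : ℤ))
        rw [Int.natCast_dvd] at this
        simpa using this
      exact Nat.dvd_antisymm h5 h4
    rw [hgcdCq] at hgcd₁
    have h6 : (q : ℤ) ∣ (Int.gcd B₁ (q : ℤ) : ℤ) := Int.natCast_dvd_natCast.mpr (Int.dvd_gcd hqB₁ dvd_rfl)
    rw [hgcd₁] at h6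
    have := Int.le_of_dvd one_pos h6
    linarith

/-- Plücker-type congruence constrains the q-adic valuations of B₁, B₂.
(Following the paper's convention that the residues Bⱼ are represented by
1 ≤ Bⱼ ≤ q^{αⱼ}; in particular B₁, B₂ are nonzero.) -/
theorem stmt_0 (q : ℕ) (hq : q.Prime) (α₁ α₂ : ℕ) (hα₁ : 1 ≤ α₁) (hα₂ : 1 ≤ α₂)
    (B₁ B₂ C₁ C₂ : ℤ)
    (hB₁lb : 1 ≤ B₁) (hB₁ub : B₁ ≤ (q : ℤ) ^ α₁)
    (hB₂lb : 1 ≤ B₂) (hB₂ub : B₂ ≤ (q : ℤ) ^ α₂)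
    (hB₁0 : B₁ ≠ 0) (hB₂0 : B₂ ≠ 0)
    (hcong : ((q : ℤ) ^ (α₁ + α₂)) ∣ ((q : ℤ) ^ α₁ * C₂ + B₁ * B₂ + (q : ℤ) ^ α₂ * C₁))
    (hgcd₁ : Int.gcd B₁ ((Int.gcd C₁ (q : ℤ) : ℕ) : ℤ) = 1)
    (hgcd₂ : Int.gcd B₂ ((Int.gcd C₂ (q : ℤ) : ℕ) : ℤ) = 1) :
    padicValInt q B₁ ≤ α₂ ∧ padicValInt q B₂ ≤ α₁ := by
  constructor
  · exact key_aux q hq α₁ α₂ hα₁ hα₂ B₁ B₂ C₁ C₂ hB₁lb hB₁ub hB₁0 hcong hgcd₁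
  · refine key_aux q hq α₂ α₁ hα₂ hα₁ B₂ B₁ C₂ C₁ hB₂lb hB₂ub hB₂0 ?_ hgcd₂
    have := hcong
    rw [Nat.add_comm α₂ α₁]
    convert this using 1
    ring
end

section
/- Let N be a prime and m₁, m₂, n₁, n₂ integers. The GL(3) long-element Kloosterman sum of level N with both moduli equal to N satisfies S^{(N)}(m₁, m₂, n₁, n₂; N, N) = N − 1 + r_N(n₁)·r_N(m₂), where r_N is the Ramanujan sum modulo N. In particular it equals N(N−1) if N divides both n₁ and m₂, equals N if N divides neither n₁ nor m₂, and equals 0 otherwise. -/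
/-- e(t) = exp(2πit) -/
noncomputable def e2pi (t : ℝ) : ℂ := Complex.exp (2 * Real.pi * Complex.I * t)

/-- Ramanujan sum r_N(n) = Σ_{a mod N, gcd(a,N)=1} e(an/N). -/
noncomputable def ramanujanSum (N : ℕ) (n : ℤ) : ℂ :=
  ∑ a ∈ Finset.range N, if Nat.gcd a N = 1 then e2pi ((((a : ℤ) * n : ℤ) : ℝ) / (N : ℝ)) else 0

lemma e2pi_add (x y : ℝ) : e2pi (x + y) = e2pi x * e2pi y := by
  rw [e2pi, e2pi, e2pi, ← Complex.exp_add]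
  congr 1
  push_cast
  ring

lemma e2pi_intCast (t : ℤ) : e2pi t = 1 := by
  rw [e2pi, ← Complex.exp_int_mul_two_pi_mul_I t]
  congr 1
  push_cast
  ring

lemma e2pi_natMul (b : ℕ) (x : ℝ) : e2pi (b * x) = e2pi x ^ b := by
  rw [e2pi, e2pi, ← Complex.exp_nat_mul]
  congr 1
  push_cast
  ring

lemma e2pi_eq_one_iff (x : ℝ) : e2pi x = 1 ↔ ∃ n : ℤ, x = n := by
  rw [e2pi, Complex.exp_eq_one_iff]
  constructor
  · rintro ⟨n, hn⟩
    refine ⟨n, ?_⟩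
    have h2 : (2 * Real.pi * Complex.I : ℂ) ≠ 0 := by
      simp [Real.pi_ne_zero, Complex.I_ne_zero]
    have : (x : ℂ) = (n : ℂ) := by
      apply mul_left_cancel₀ h2
      rw [hn]; ring
    exact_mod_cast this
  · rintro ⟨n, rfl⟩
    exact ⟨n, by push_cast; ring⟩

lemma e2pi_div_eq_one_iff (N : ℕ) (hN : 0 < N) (k : ℤ) :
    e2pi ((k : ℝ) / N) = 1 ↔ (N : ℤ) ∣ k := by
  have hN' : (N : ℝ) ≠ 0 := Nat.cast_ne_zero.mpr hN.ne'
  rw [e2pi_eq_one_iff]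
  constructor
  · rintro ⟨n, hn⟩
    refine ⟨n, ?_⟩
    have : (k : ℝ) = N * n := by
      field_simp at hn; linarith [hn]
    exact_mod_cast this
  · rintro ⟨t, rfl⟩
    exact ⟨t, by rw [Int.cast_mul, Int.cast_natCast, mul_div_cancel_left₀ _ hN']⟩

lemma e2pi_div_congr (N : ℕ) (hN : 0 < N) (a b : ℤ) (h : (N : ℤ) ∣ a - b) :
    e2pi ((a : ℝ) / N) = e2pi ((b : ℝ) / N) := by
  have hN' : (N : ℝ) ≠ 0 := Nat.cast_ne_zero.mpr hN.ne'
  obtain ⟨t, ht⟩ := h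
  have ha : a = b + N * t := by linarith
  subst ha
  have : ((b + N * t : ℤ) : ℝ) / N = (b : ℝ) / N + (t : ℤ) := by
    push_cast; field_simp
  rw [this, e2pi_add, e2pi_intCast, mul_one]

lemma sum_e2pi_eq (N : ℕ) (hN : 0 < N) (k : ℤ) :
    ∑ b ∈ Finset.range N, e2pi ((((b : ℤ) * k : ℤ) : ℝ) / N) =
      if (N : ℤ) ∣ k then (N : ℂ) else 0 := by
  have hN' : (N : ℝ) ≠ 0 := Nat.cast_ne_zero.mpr hN.ne'
  have hterm : ∀ b : ℕ, e2pi ((((b : ℤ) * k : ℤ) : ℝ) / N) = e2pi ((k : ℝ) / N) ^ b := by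
    intro b
    rw [← e2pi_natMul]
    congr 1
    push_cast; ring
  simp only [hterm]
  by_cases h : (N : ℤ) ∣ k
  · rw [if_pos h]
    have h1 : e2pi ((k : ℝ) / N) = 1 := (e2pi_div_eq_one_iff N hN k).mpr h
    simp [h1]
  · rw [if_neg h]
    have h1 : e2pi ((k : ℝ) / N) ≠ 1 := fun hh => h ((e2pi_div_eq_one_iff N hN k).mp hh)
    rw [geom_sum_eq h1]
    have hpow : e2pi ((k : ℝ) / N) ^ N = 1 := by
      rw [← e2pi_natMul]
      have : (N : ℝ) * ((k : ℝ) / N) = (k : ℤ) := by field_simp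
      rw [this, e2pi_intCast]
    rw [hpow]
    simp

lemma ramanujan_eval (N : ℕ) (hN : N.Prime) (n : ℤ) :
    ramanujanSum N n = if (N : ℤ) ∣ n then (N : ℂ) - 1 else -1 := by
  have hN0 : 0 < N := hN.pos
  rw [ramanujanSum]
  have key : ∀ a ∈ Finset.range N,
      (if Nat.gcd a N = 1 then e2pi ((((a : ℤ) * n : ℤ) : ℝ) / N) else 0) =
      e2pi ((((a : ℤ) * n : ℤ) : ℝ) / N) - (if a = 0 then 1 else 0) := by
    intro a ha
    rcases eq_or_ne a 0 with rfl | h0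
    · simp only [Nat.gcd_zero_left]
      rw [if_neg hN.one_lt.ne']
      have h0 : ((((0 : ℕ) : ℤ) * n : ℤ) : ℝ) / N = ((0 : ℤ) : ℝ) := by push_cast; simp
      rw [h0, e2pi_intCast]
      norm_num
    · have hlt := Finset.mem_range.mp ha
      have : Nat.gcd a N = 1 := by
        have := (Nat.Prime.coprime_iff_not_dvd hN).mpr (Nat.not_dvd_of_pos_of_lt (Nat.pos_of_ne_zero h0) hlt)
        exact Nat.Coprime.gcd_eq_one this.symm
      rw [if_pos this, if_neg h0, sub_zero]
  rw [Finset.sum_congr rfl key, Finset.sum_sub_distrib, sum_e2pi_eq N hN0 n]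
  rw [Finset.sum_ite_eq' (Finset.range N) 0 (fun _ => (1 : ℂ))]
  rw [if_pos (Finset.mem_range.mpr hN0)]
  split_ifs <;> ring

/-- the GL(3) long-element Kloosterman sum of prime level N with both
moduli equal to N.  The sum is stated for an arbitrary choice of auxiliary solutions
Y_j, Z_j of Y_j B_j + Z_j C_j ≡ 1 (mod N); its value does not depend on the choice. -/
theorem stmt_2 (N : ℕ) (hN : N.Prime) (m₁ m₂ n₁ n₂ : ℤ)
    (Y₁ Z₁ Y₂ Z₂ : ℕ → ℕ → ℤ)
    (hYZ₁ : ∀ B C : ℕ, Nat.gcd B (Nat.gcd C N) = 1 →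
      (N : ℤ) ∣ (Y₁ B C * B + Z₁ B C * C - 1))
    (hYZ₂ : ∀ B C : ℕ, Nat.gcd B (Nat.gcd C N) = 1 →
      (N : ℤ) ∣ (Y₂ B C * B + Z₂ B C * C - 1))
    (S : ℂ)
    (hS : S = ∑ B₁ ∈ Finset.range N, ∑ C₁ ∈ Finset.range N,
        ∑ B₂ ∈ Finset.range N, ∑ C₂ ∈ Finset.range N,
      if ((N : ℤ) ^ 2 ∣ ((N : ℤ) * C₂ + (B₁ : ℤ) * B₂ + (N : ℤ) * C₁)
          ∧ Nat.gcd B₁ (Nat.gcd C₁ N) = 1 ∧ Nat.gcd B₂ (Nat.gcd C₂ N) = 1 ∧ N ∣ B₁)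
      then e2pi (((m₁ * B₁ + n₁ * (Y₁ B₁ C₁ * N - Z₁ B₁ C₁ * B₂) : ℤ) : ℝ) / (N : ℝ)
             + ((m₂ * B₂ + n₂ * (Y₂ B₂ C₂ * N - Z₂ B₂ C₂ * B₁) : ℤ) : ℝ) / (N : ℝ))
      else 0) :
    S = (N : ℂ) - 1 + ramanujanSum N n₁ * ramanujanSum N m₂
    ∧ ((N : ℤ) ∣ n₁ ∧ (N : ℤ) ∣ m₂ → S = (N : ℂ) * ((N : ℂ) - 1))
    ∧ (¬ (N : ℤ) ∣ n₁ ∧ ¬ (N : ℤ) ∣ m₂ → S = (N : ℂ))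
    ∧ (¬ ((N : ℤ) ∣ n₁ ∧ (N : ℤ) ∣ m₂) ∧ ¬ (¬ (N : ℤ) ∣ n₁ ∧ ¬ (N : ℤ) ∣ m₂) → S = 0) := by
  haveI : Fact N.Prime := ⟨hN⟩
  have hN0 : 0 < N := hN.pos
  have hN1 : 1 < N := hN.one_lt
  -- Step 1: collapse the quadruple sum
  have hT : S = ∑ C₁ ∈ Finset.range N,
      (if ((C₁ : ZMod N) ≠ 0 ∧ (m₂ : ZMod N) * (C₁ : ZMod N) = (n₁ : ZMod N))
        then (N : ℂ) else 0) := by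
    rw [hS]
    rw [Finset.sum_eq_single_of_mem 0 (Finset.mem_range.mpr hN0) (by
      intro b hb hb0
      refine Finset.sum_eq_zero fun _ _ => Finset.sum_eq_zero fun _ _ =>
        Finset.sum_eq_zero fun _ _ => ?_
      rw [if_neg]
      rintro ⟨-, -, -, hdvd⟩
      exact hb0 (Nat.eq_zero_of_dvd_of_lt hdvd (Finset.mem_range.mp hb)))]
    refine Finset.sum_congr rfl fun C₁ hC₁ => ?_
    by_cases hcop : Nat.gcd C₁ N = 1
    · have hlt : C₁ < N := Finset.mem_range.mp hC₁
      have hpos : 0 < C₁ := by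
        rcases Nat.eq_zero_or_pos C₁ with rfl | h
        · rw [Nat.gcd_zero_left] at hcop; exact absurd hcop hN1.ne'
        · exact h
      have hC0 : (C₁ : ZMod N) ≠ 0 := by
        rw [Ne, ZMod.natCast_eq_zero_iff]
        exact Nat.not_dvd_of_pos_of_lt hpos hlt
      have hz := hYZ₁ 0 C₁ (by simpa using hcop)
      set z := Z₁ 0 C₁ with hzdef
      have hz' : (N : ℤ) ∣ (z * C₁ - 1) := by
        simpa using hz
      have hzC : (z : ZMod N) * (C₁ : ZMod N) = 1 := by
        have h := (ZMod.intCast_zmod_eq_zero_iff_dvd _ N).mpr hz'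
        push_cast at h
        linear_combination h
      have hgcd2 : Nat.gcd (N - C₁) N = 1 := by
        have hnd : ¬ N ∣ (N - C₁) := Nat.not_dvd_of_pos_of_lt (by omega) (by omega)
        exact Nat.Coprime.gcd_eq_one (((Nat.Prime.coprime_iff_not_dvd hN).mpr hnd).symm)
      have hmem2 : N - C₁ ∈ Finset.range N := Finset.mem_range.mpr (by omega)
      have hstep : ∀ B₂ ∈ Finset.range N,
          (∑ C₂ ∈ Finset.range N,
            if ((N : ℤ) ^ 2 ∣ ((N : ℤ) * C₂ + ((0 : ℕ) : ℤ) * B₂ + (N : ℤ) * C₁)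
                ∧ Nat.gcd 0 (Nat.gcd C₁ N) = 1 ∧ Nat.gcd B₂ (Nat.gcd C₂ N) = 1 ∧ N ∣ 0)
            then e2pi (((m₁ * ((0:ℕ):ℤ) + n₁ * (Y₁ 0 C₁ * N - Z₁ 0 C₁ * B₂) : ℤ) : ℝ) / (N : ℝ)
                   + ((m₂ * B₂ + n₂ * (Y₂ B₂ C₂ * N - Z₂ B₂ C₂ * ((0:ℕ):ℤ)) : ℤ) : ℝ) / (N : ℝ))
            else 0)
          = e2pi ((((B₂ : ℤ) * (m₂ - n₁ * z) : ℤ) : ℝ) / N) := by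
        intro B₂ hB₂
        rw [Finset.sum_eq_single_of_mem (N - C₁) hmem2 (by
          intro c₂ hc₂ hne
          rw [if_neg]
          rintro ⟨hdvd, -, -, -⟩
          obtain ⟨t, ht⟩ := hdvd
          have hc₂lt : c₂ < N := Finset.mem_range.mp hc₂
          have hNZ : (N : ℤ) ≠ 0 := by exact_mod_cast hN0.ne'
          have heq : (c₂ : ℤ) + C₁ = N * t := by
            have h2 : (N : ℤ) * ((c₂ : ℤ) + C₁) = (N : ℤ) * ((N : ℤ) * t) := by
              push_cast at ht ⊢; linarith
            exact mul_left_cancel₀ hNZ h2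
          have hdN : N ∣ (c₂ + C₁) := by
            have : (N : ℤ) ∣ ((c₂ + C₁ : ℕ) : ℤ) := ⟨t, by push_cast; linarith⟩
            exact_mod_cast this
          obtain ⟨s, hs⟩ := hdN
          have hs1 : s = 1 := by
            rcases Nat.lt_or_ge s 2 with h | h
            · interval_cases s
              · omega
              · rfl
            · exfalso
              have h2N : N * 2 ≤ N * s := Nat.mul_le_mul (le_refl N) h
              omega
          rw [hs1, mul_one] at hs
          omega)]
        rw [if_pos ⟨⟨1, by push_cast [Nat.cast_sub hlt.le]; ring⟩,
          by simpa using hcop, by rw [hgcd2]; exact Nat.gcd_one_right B₂, dvd_zero N⟩]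
        have hE : ((m₁ * ((0:ℕ):ℤ) + n₁ * (Y₁ 0 C₁ * N - Z₁ 0 C₁ * B₂) : ℤ) : ℝ) / (N : ℝ)
            + ((m₂ * B₂ + n₂ * (Y₂ B₂ (N - C₁) * N - Z₂ B₂ (N - C₁) * ((0:ℕ):ℤ)) : ℤ) : ℝ) / (N : ℝ)
            = (((m₁ * ((0:ℕ):ℤ) + n₁ * (Y₁ 0 C₁ * N - Z₁ 0 C₁ * B₂)
                + (m₂ * B₂ + n₂ * (Y₂ B₂ (N - C₁) * N - Z₂ B₂ (N - C₁) * ((0:ℕ):ℤ))) : ℤ) : ℝ)) / N := by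
          push_cast; ring
        rw [hE]
        exact e2pi_div_congr N hN0 _ _
          ⟨n₁ * Y₁ 0 C₁ + n₂ * Y₂ B₂ (N - C₁), by rw [← hzdef]; push_cast; ring⟩
      rw [Finset.sum_congr rfl hstep, sum_e2pi_eq N hN0 (m₂ - n₁ * z)]
      have hiff : (N : ℤ) ∣ (m₂ - n₁ * z) ↔
          (m₂ : ZMod N) * (C₁ : ZMod N) = (n₁ : ZMod N) := by
        rw [← ZMod.intCast_zmod_eq_zero_iff_dvd]
        push_cast
        constructor
        · intro h
          linear_combination (C₁ : ZMod N) * h + (n₁ : ZMod N) * hzC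
        · intro h
          linear_combination (z : ZMod N) * h - (m₂ : ZMod N) * hzC
      by_cases hd : (N : ℤ) ∣ (m₂ - n₁ * z)
      · rw [if_pos hd, if_pos ⟨hC0, hiff.mp hd⟩]
      · rw [if_neg hd, if_neg (fun hc => hd (hiff.mpr hc.2))]
    · have hC0 : (C₁ : ZMod N) = 0 := by
        rw [ZMod.natCast_eq_zero_iff]
        by_contra hnd
        exact hcop (Nat.Coprime.gcd_eq_one (((Nat.Prime.coprime_iff_not_dvd hN).mpr hnd).symm))
      rw [if_neg (by simp [hC0])]
      refine Finset.sum_eq_zero fun _ _ => Finset.sum_eq_zero fun _ _ => ?_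
      rw [if_neg]
      rintro ⟨-, h2, -, -⟩
      exact hcop (by simpa using h2)
  -- Step 2: evaluate the remaining sum
  set P := (m₂ : ZMod N) with hPdef
  set Q := (n₁ : ZMod N) with hQdef
  have hPiff : (N : ℤ) ∣ m₂ ↔ P = 0 := (ZMod.intCast_zmod_eq_zero_iff_dvd m₂ N).symm
  have hQiff : (N : ℤ) ∣ n₁ ↔ Q = 0 := (ZMod.intCast_zmod_eq_zero_iff_dvd n₁ N).symm
  have hTval : S = if Q = 0 ∧ P = 0 then (N : ℂ) * ((N : ℂ) - 1)
      else if Q ≠ 0 ∧ P ≠ 0 then (N : ℂ) else 0 := by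
    rw [hT]
    by_cases hP : P = 0
    · by_cases hQ : Q = 0
      · rw [if_pos ⟨hQ, hP⟩]
        have key : ∀ C₁ ∈ Finset.range N,
            (if ((C₁ : ZMod N) ≠ 0 ∧ P * (C₁ : ZMod N) = Q) then (N : ℂ) else 0)
            = (N : ℂ) - (if C₁ = 0 then (N : ℂ) else 0) := by
          intro C₁ hC₁
          rcases eq_or_ne C₁ 0 with rfl | h0
          · rw [if_neg (by simp), if_pos rfl]; ring
          · have hC0 : (C₁ : ZMod N) ≠ 0 := by
              rw [Ne, ZMod.natCast_eq_zero_iff]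
              exact Nat.not_dvd_of_pos_of_lt (Nat.pos_of_ne_zero h0) (Finset.mem_range.mp hC₁)
            rw [if_pos ⟨hC0, by rw [hP, hQ, zero_mul]⟩, if_neg h0]; ring
        rw [Finset.sum_congr rfl key, Finset.sum_sub_distrib, Finset.sum_const,
          Finset.sum_ite_eq' (Finset.range N) 0 (fun _ => (N : ℂ)),
          if_pos (Finset.mem_range.mpr hN0), Finset.card_range, nsmul_eq_mul]
        ring
      · rw [if_neg (fun h => hQ h.1), if_neg (fun h => h.2 hP)]
        refine Finset.sum_eq_zero fun C₁ _ => ?_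
        rw [if_neg]
        rintro ⟨-, hc⟩
        exact hQ (by rw [← hc, hP, zero_mul])
    · set a : ZMod N := Q / P with hadef
      have haval : ((a.val : ℕ) : ZMod N) = a := ZMod.natCast_rightInverse a
      have key : ∀ C₁ ∈ Finset.range N,
          (if ((C₁ : ZMod N) ≠ 0 ∧ P * (C₁ : ZMod N) = Q) then (N : ℂ) else 0)
          = (if (C₁ = a.val ∧ a ≠ 0) then (N : ℂ) else 0) := by
        intro C₁ hC₁
        have hv : (C₁ : ZMod N) = a ↔ C₁ = a.val := by
          constructor
          · intro h; rw [← h]; exact (ZMod.val_cast_of_lt (Finset.mem_range.mp hC₁)).symm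
          · intro h; rw [h, haval]
        have hPx : P * (C₁ : ZMod N) = Q ↔ (C₁ : ZMod N) = a := by
          rw [hadef, eq_div_iff hP, mul_comm P (C₁ : ZMod N)]
        refine if_congr ?_ rfl rfl
        constructor
        · rintro ⟨h1, h2⟩
          have h3 := hPx.mp h2
          exact ⟨hv.mp h3, fun h => h1 (h3.trans h)⟩
        · rintro ⟨h1, h2⟩
          have h3 : (C₁ : ZMod N) = a := hv.mpr h1
          exact ⟨by rw [h3]; exact h2, hPx.mpr h3⟩
      rw [Finset.sum_congr rfl key]
      by_cases ha0 : a = 0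
      · have hQ0 : Q = 0 := by
          rcases div_eq_zero_iff.mp (by rw [← hadef]; exact ha0) with h | h
          · exact h
          · exact absurd h hP
        rw [if_neg (fun h => hP h.2), if_neg (fun h => h.1 hQ0)]
        exact Finset.sum_eq_zero fun _ _ => if_neg (fun h => h.2 ha0)
      · have hQ0 : Q ≠ 0 := fun h => ha0 (by rw [hadef, h, zero_div])
        rw [if_neg (fun h => hP h.2), if_pos ⟨hQ0, hP⟩]
        have key2 : ∀ C₁ ∈ Finset.range N,
            (if (C₁ = a.val ∧ a ≠ 0) then (N : ℂ) else 0)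
            = (if C₁ = a.val then (N : ℂ) else 0) := fun C₁ _ => by simp [ha0]
        rw [Finset.sum_congr rfl key2,
          Finset.sum_ite_eq' (Finset.range N) a.val (fun _ => (N : ℂ)),
          if_pos (Finset.mem_range.mpr (ZMod.val_lt a))]
  refine ⟨?_, ?_, ?_, ?_⟩
  · rw [ramanujan_eval N hN n₁, ramanujan_eval N hN m₂, hTval]
    by_cases h1 : (N : ℤ) ∣ n₁ <;> by_cases h2 : (N : ℤ) ∣ m₂
    · rw [if_pos ⟨hQiff.mp h1, hPiff.mp h2⟩, if_pos h1, if_pos h2]; ring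
    · rw [if_neg (fun h => h2 (hPiff.mpr h.2)),
        if_neg (fun h => h.1 (hQiff.mp h1)), if_pos h1, if_neg h2]; ring
    · rw [if_neg (fun h => h1 (hQiff.mpr h.1)),
        if_neg (fun h => h.2 (hPiff.mp h2)), if_neg h1, if_pos h2]; ring
    · rw [if_neg (fun h => h1 (hQiff.mpr h.1)),
        if_pos ⟨fun h => h1 (hQiff.mpr h), fun h => h2 (hPiff.mpr h)⟩,
        if_neg h1, if_neg h2]; ring
  · rintro ⟨h1, h2⟩
    rw [hTval, if_pos ⟨hQiff.mp h1, hPiff.mp h2⟩]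
  · rintro ⟨h1, h2⟩
    rw [hTval, if_neg (fun h => h1 (hQiff.mpr h.1)),
      if_pos ⟨fun h => h1 (hQiff.mpr h), fun h => h2 (hPiff.mpr h)⟩]
  · rintro ⟨h1, h2⟩
    rw [hTval, if_neg (fun h => h1 ⟨hQiff.mpr h.1, hPiff.mpr h.2⟩),
      if_neg (fun h => h2 ⟨fun hd => h.1 (hQiff.mp hd), fun hd => h.2 (hPiff.mp hd)⟩)]
end

section
/- Let m₁, n₁, m₂, n₂ be nonzero integers with gcd(m₁m₂n₁n₂, N) = 1, and let X₁, X₂ ≥ N. Assume the bound |S^{(N)}(m₁, m₂, n₁, n₂; D₁, D₂)| ≤ C(ε)·(D₁D₂)^{1/2+ε}·((D₁,D₂)·(m₁n₁,[D₁,D₂])·(m₂n₂,[D₁,D₂]))^{1/2} for all N | D₁, N | D₂ (Stevens' bound). Then Σ_{N|D₁ ≤ X₁} Σ_{N|D₂ ≤ X₂} |S^{(N)}(m₁, m₂, n₁, n₂; D₁, D₂)| ≪_ε (X₁X₂)^{3/2+ε} (m₁n₂m₂n₁)^ε N^{−3/2}. -/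
open Finset




lemma rpow_neg_three_halves_eq {x : ℝ} (hx : 0 < x) :
    x ^ (-(3:ℝ)/2) = 1 / (x * Real.sqrt x) := by
  rw [show (-(3:ℝ)/2) = -(1 + 1/2) by norm_num, Real.rpow_neg hx.le, Real.rpow_add hx,
    Real.rpow_one, ← Real.sqrt_eq_rpow, one_div]

lemma sum_rpow_neg_three_halves (K : ℕ) :
    ∑ j ∈ Icc 1 K, ((j : ℝ)) ^ (-(3:ℝ)/2) ≤ 3 := by
  have key : ∀ K : ℕ, 1 ≤ K → ∑ j ∈ Icc 1 K, ((j : ℝ)) ^ (-(3:ℝ)/2) ≤ 3 - 2 / Real.sqrt K := by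
    intro K hK
    induction K with
    | zero => omega
    | succ n ih =>
      rcases Nat.eq_or_lt_of_le hK with h1 | h1
      · rw [← h1, Finset.Icc_self, Finset.sum_singleton]
        norm_num [Real.one_rpow, rpow_neg_three_halves_eq]
      · have hn : 1 ≤ n := by omega
        have ihn := ih hn
        rw [Finset.sum_Icc_succ_top (by omega)]
        set s := Real.sqrt n with hsdef
        set t := Real.sqrt ((n:ℝ)+1) with htdef
        have hs : (0:ℝ) < s := Real.sqrt_pos.mpr (by positivity)
        have ht : (0:ℝ) < t := Real.sqrt_pos.mpr (by positivity)
        have hst : s ≤ t := Real.sqrt_le_sqrt (by linarith)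
        have hsq : t^2 = s^2 + 1 := by
          rw [hsdef, htdef, Real.sq_sqrt (by positivity), Real.sq_sqrt (by positivity)]
        have hval : ((n+1:ℕ) : ℝ) ^ (-(3:ℝ)/2) = 1 / (t^2 * t) := by
          rw [rpow_neg_three_halves_eq (by positivity)]
          push_cast
          rw [← htdef, Real.sq_sqrt (by positivity : (0:ℝ) ≤ (n:ℝ)+1)]
        have hstep : 1 / (t^2 * t) ≤ 2 / s - 2 / t := by
          have h2 : 2 / s - 2 / t = 2 * (t - s) / (s * t) := by
            field_simp
          have h3 : (t - s) * (t + s) = 1 := by nlinarith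
          rw [h2]
          rw [div_le_div_iff₀ (by positivity) (by positivity)]
          -- 1 * (s*t) ≤ 2*(t-s) * (t^2*t)
          nlinarith [mul_pos hs ht, sq_nonneg (t - s), mul_nonneg (sub_nonneg.mpr hst) (sq_nonneg t)]
        have hcast : (↑(n+1) : ℝ) = (n:ℝ) + 1 := by push_cast; ring
        have htK : Real.sqrt ((n+1:ℕ):ℝ) = t := by rw [hcast]
        rw [hval, htK]
        linarith
  rcases Nat.eq_zero_or_pos K with h | h
  · simp [h]
  · have h1 := key K h
    have h2 : (0:ℝ) < Real.sqrt K := Real.sqrt_pos.mpr (by exact_mod_cast h)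
    have h3 : 0 < 2 / Real.sqrt K := by positivity
    linarith





-- per-prime bound, small prime case
lemma perprime_small (ε : ℝ) (hε : 0 < ε) (p k : ℕ) (hp : 2 ≤ p) :
    ((k:ℝ) + 1) ≤ (2 + 8 / (ε * Real.log 2)^2) * (p:ℝ) ^ ((k:ℝ) * ε) := by
  have hlog2 : 0 < Real.log 2 := Real.log_pos (by norm_num)
  obtain ⟨y, hy⟩ : ∃ y:ℝ, y = ε * Real.log 2 := ⟨_, rfl⟩
  rw [← hy]
  have hy0 : 0 < y := by rw [hy]; positivity
  have h2 : (2:ℝ) ^ ((k:ℝ) * ε) ≤ (p:ℝ) ^ ((k:ℝ) * ε) :=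
    Real.rpow_le_rpow (by norm_num) (by exact_mod_cast hp) (by positivity)
  have hexp : (2:ℝ) ^ ((k:ℝ) * ε) = Real.exp ((k:ℝ) * y) := by
    rw [Real.rpow_def_of_pos (by norm_num), hy]
    ring_nf
  obtain ⟨s, hs⟩ : ∃ s:ℝ, s = (k:ℝ) * y / 2 + 1 := ⟨_, rfl⟩
  have hk0 : (0:ℝ) ≤ (k:ℝ) := Nat.cast_nonneg k
  have hky : (0:ℝ) ≤ (k:ℝ) * y := mul_nonneg hk0 hy0.le
  have hexp2 : s^2 ≤ Real.exp ((k:ℝ) * y) := by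
    have h3 : (k:ℝ) * y / 2 + 1 ≤ Real.exp ((k:ℝ) * y / 2) := Real.add_one_le_exp _
    have h5 : Real.exp ((k:ℝ)*y/2) * Real.exp ((k:ℝ)*y/2) = Real.exp ((k:ℝ)*y) := by
      rw [← Real.exp_add]; ring_nf
    nlinarith [Real.exp_pos ((k:ℝ)*y/2)]
  have hs1 : 1 ≤ s := by nlinarith
  have hs2 : (k:ℝ)^2 * y^2 / 4 ≤ s^2 := by nlinarith
  have chain : ((k:ℝ)+1) ≤ (2 + 8/y^2) * s^2 := by
    have e3 : (8/y^2) * ((k:ℝ)^2 * y^2/4) ≤ (8/y^2) * s^2 :=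
      mul_le_mul_of_nonneg_left hs2 (by positivity)
    have e4 : (8/y^2) * ((k:ℝ)^2 * y^2/4) = 2 * (k:ℝ)^2 := by field_simp; ring
    nlinarith [sq_nonneg ((k:ℝ) - 1)]
  calc ((k:ℝ)+1) ≤ (2 + 8/y^2) * s^2 := chain
    _ ≤ (2 + 8/y^2) * Real.exp ((k:ℝ)*y) :=
        mul_le_mul_of_nonneg_left hexp2 (by positivity)
    _ = (2 + 8/y^2) * (2:ℝ) ^ ((k:ℝ) * ε) := by rw [hexp]
    _ ≤ (2 + 8/y^2) * (p:ℝ) ^ ((k:ℝ) * ε) :=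
        mul_le_mul_of_nonneg_left h2 (by positivity)

lemma tau_bound (ε : ℝ) (hε : 0 < ε) :
    ∃ C : ℝ, 1 ≤ C ∧ ∀ n : ℕ, n ≠ 0 → (n.divisors.card : ℝ) ≤ C * (n:ℝ) ^ ε := by
  have hlog2 : 0 < Real.log 2 := Real.log_pos (by norm_num)
  obtain ⟨A, hA⟩ : ∃ A:ℝ, A = 2 + 8/(ε*Real.log 2)^2 := ⟨_, rfl⟩
  have hA1 : 1 ≤ A := by
    rw [hA]
    have : 0 ≤ 8/(ε*Real.log 2)^2 := by positivity
    linarith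
  obtain ⟨B, hB⟩ : ∃ B:ℕ, B = ⌈(2:ℝ)^(1/ε)⌉₊ := ⟨_, rfl⟩
  refine ⟨A^B, one_le_pow₀ hA1, ?_⟩
  intro n hn
  classical
  have hτ : (n.divisors.card : ℝ) = ∏ p ∈ n.primeFactors, ((n.factorization p + 1 : ℕ) : ℝ) := by
    rw [Nat.card_divisors hn]; push_cast; rfl
  -- pointwise bound
  have hpt : ∀ p ∈ n.primeFactors,
      ((n.factorization p + 1 : ℕ) : ℝ) ≤
        (if (p:ℝ)^ε < 2 then A else 1) * (p:ℝ) ^ ((n.factorization p : ℝ) * ε) := by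
    intro p hp
    have hpp : p.Prime := Nat.prime_of_mem_primeFactors hp
    have hp2 : 2 ≤ p := hpp.two_le
    set k := n.factorization p with hk
    by_cases hsmall : (p:ℝ)^ε < 2
    · rw [if_pos hsmall, hA]
      push_cast
      exact perprime_small ε hε p k hp2
    · rw [if_neg hsmall, one_mul]
      push_neg at hsmall
      have h1 : ((k + 1 : ℕ) : ℝ) ≤ (2:ℝ)^k := by
        exact_mod_cast Nat.lt_two_pow_self (n := k)
      have h2 : (2:ℝ)^k ≤ ((p:ℝ)^ε)^k :=
        pow_le_pow_left₀ (by norm_num) hsmall k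
      have h3 : ((p:ℝ)^ε)^k = (p:ℝ) ^ ((k:ℝ) * ε) := by
        rw [← Real.rpow_natCast ((p:ℝ)^ε) k, ← Real.rpow_mul (by positivity), mul_comm]
      calc ((k + 1 : ℕ) : ℝ) ≤ (2:ℝ)^k := h1
        _ ≤ ((p:ℝ)^ε)^k := h2
        _ = (p:ℝ) ^ ((k:ℝ) * ε) := h3
  have hprod : (n.divisors.card : ℝ) ≤
      (∏ p ∈ n.primeFactors, (if (p:ℝ)^ε < 2 then A else 1)) *
        ∏ p ∈ n.primeFactors, (p:ℝ) ^ ((n.factorization p : ℝ) * ε) := by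
    rw [hτ, ← Finset.prod_mul_distrib]
    exact Finset.prod_le_prod (fun p _ => by positivity) hpt
  -- second product equals n^ε
  have hn' : (0:ℝ) < (n:ℝ) := by exact_mod_cast Nat.pos_of_ne_zero hn
  have hP2 : ∏ p ∈ n.primeFactors, (p:ℝ) ^ ((n.factorization p : ℝ) * ε) = (n:ℝ) ^ ε := by
    have e1 : ∀ p ∈ n.primeFactors, (p:ℝ) ^ ((n.factorization p : ℝ) * ε)
        = ((p:ℝ) ^ (n.factorization p : ℕ)) ^ ε := by
      intro p hp
      rw [← Real.rpow_natCast (p:ℝ) (n.factorization p), ← Real.rpow_mul (by positivity)]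
    rw [Finset.prod_congr rfl e1, Real.finset_prod_rpow _ _ (fun p _ => by positivity)]
    congr 1
    have := Nat.factorization_prod_pow_eq_self hn
    rw [Finsupp.prod, Nat.support_factorization] at this
    conv_rhs => rw [← this]
    push_cast
    rfl
  -- first product bounded by A^B
  have hP1 : (∏ p ∈ n.primeFactors, (if (p:ℝ)^ε < 2 then A else 1)) ≤ A^B := by
    rw [Finset.prod_ite (fun _ => A) (fun _ => (1:ℝ)), Finset.prod_const, Finset.prod_const_one,
      mul_one]
    apply pow_le_pow_right₀ hA1
    rw [hB]
    refine le_trans (Finset.card_le_card ?_) (le_of_eq (Finset.card_range _))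
    intro p hp
    rw [Finset.mem_filter] at hp
    rw [Finset.mem_range, Nat.lt_ceil]
    have h1 : ((p:ℝ)^ε)^(1/ε) < (2:ℝ)^(1/ε) :=
      Real.rpow_lt_rpow (by positivity) hp.2 (by positivity)
    have h2 : ((p:ℝ)^ε)^(1/ε) = (p:ℝ) := by
      rw [← Real.rpow_mul (by positivity), mul_one_div, div_self hε.ne', Real.rpow_one]
    rwa [h2] at h1
  calc (n.divisors.card : ℝ) ≤ _ := hprod
    _ = (∏ p ∈ n.primeFactors, (if (p:ℝ)^ε < 2 then A else 1)) * (n:ℝ)^ε := by rw [hP2]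
    _ ≤ A^B * (n:ℝ)^ε := mul_le_mul_of_nonneg_right hP1 (by positivity)





lemma rpow_half_le {x y : ℝ} (hx : 0 ≤ x) (hy : 0 ≤ y) (h : x ≤ y^2) : x^((1:ℝ)/2) ≤ y := by
  have h2 := Real.rpow_le_rpow hx h (by norm_num : (0:ℝ) ≤ 1/2)
  rwa [← Real.rpow_natCast y 2, ← Real.rpow_mul hy,
    (by norm_num : ((2:ℕ):ℝ)*(1/2) = 1), Real.rpow_one] at h2

lemma gcd_pair_sum (M₁ M₂ : ℕ) (h₁ : M₁ ≠ 0) (h₂ : M₂ ≠ 0) (K : ℕ) (g : ℕ → ℝ)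
    (hg : ∀ t, 0 ≤ g t) (c : ℝ)
    (hbd : ∀ ℓ : ℕ, 1 ≤ ℓ → (ℓ:ℝ) * ∑ t ∈ (Icc 1 K).filter (fun t => ℓ ∣ t), g t ≤ c) :
    ∑ t ∈ Icc 1 K, ((M₁.gcd t * M₂.gcd t : ℕ):ℝ)^((1:ℝ)/2) * g t
      ≤ (M₁.divisors.card : ℝ) * (M₂.divisors.card : ℝ) * c := by
  classical
  have hmaps : ∀ t ∈ Icc 1 K, (M₁.gcd t, M₂.gcd t) ∈ M₁.divisors ×ˢ M₂.divisors := by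
    intro t ht
    rw [Finset.mem_product, Nat.mem_divisors, Nat.mem_divisors]
    exact ⟨⟨Nat.gcd_dvd_left _ _, h₁⟩, ⟨Nat.gcd_dvd_left _ _, h₂⟩⟩
  rw [← Finset.sum_fiberwise_of_maps_to hmaps
    (fun t => ((M₁.gcd t * M₂.gcd t : ℕ):ℝ)^((1:ℝ)/2) * g t)]
  have hc : 0 ≤ c := by
    have := hbd 1 le_rfl
    have hnn : 0 ≤ ∑ t ∈ (Icc 1 K).filter (fun t => 1 ∣ t), g t :=
      Finset.sum_nonneg (fun t _ => hg t)
    push_cast at this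
    linarith
  have hpair : ∀ uv ∈ M₁.divisors ×ˢ M₂.divisors,
      (∑ t ∈ (Icc 1 K).filter (fun t => (M₁.gcd t, M₂.gcd t) = uv),
        ((M₁.gcd t * M₂.gcd t : ℕ):ℝ)^((1:ℝ)/2) * g t) ≤ c := by
    rintro ⟨u, v⟩ huv
    rw [Finset.mem_product] at huv
    have hu0 : 0 < u := Nat.pos_of_mem_divisors huv.1
    have hv0 : 0 < v := Nat.pos_of_mem_divisors huv.2
    have hl0 : 0 < u.lcm v := Nat.pos_of_ne_zero (Nat.lcm_ne_zero hu0.ne' hv0.ne')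
    -- rewrite the summand on the fiber
    have hcongr : ∀ t ∈ (Icc 1 K).filter (fun t => (M₁.gcd t, M₂.gcd t) = (u, v)),
        ((M₁.gcd t * M₂.gcd t : ℕ):ℝ)^((1:ℝ)/2) * g t = ((u * v : ℕ):ℝ)^((1:ℝ)/2) * g t := by
      intro t ht
      rw [Finset.mem_filter] at ht
      have h1 : M₁.gcd t = u := congrArg Prod.fst ht.2
      have h2 : M₂.gcd t = v := congrArg Prod.snd ht.2
      rw [h1, h2]
    rw [Finset.sum_congr rfl hcongr, ← Finset.mul_sum]
    have hsub : (Icc 1 K).filter (fun t => (M₁.gcd t, M₂.gcd t) = (u, v)) ⊆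
        (Icc 1 K).filter (fun t => u.lcm v ∣ t) := by
      intro t ht
      rw [Finset.mem_filter] at ht ⊢
      refine ⟨ht.1, Nat.lcm_dvd ?_ ?_⟩
      · have : M₁.gcd t = u := congrArg Prod.fst ht.2
        exact this ▸ Nat.gcd_dvd_right _ _
      · have : M₂.gcd t = v := congrArg Prod.snd ht.2
        exact this ▸ Nat.gcd_dvd_right _ _
    have hmono : ∑ t ∈ (Icc 1 K).filter (fun t => (M₁.gcd t, M₂.gcd t) = (u, v)), g t ≤
        ∑ t ∈ (Icc 1 K).filter (fun t => u.lcm v ∣ t), g t :=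
      Finset.sum_le_sum_of_subset_of_nonneg hsub (fun t _ _ => hg t)
    have hsqrt : ((u * v : ℕ):ℝ)^((1:ℝ)/2) ≤ ((u.lcm v : ℕ) : ℝ) := by
      apply rpow_half_le (by positivity) (by positivity)
      have h5 : u * v = u.gcd v * u.lcm v := (Nat.gcd_mul_lcm u v).symm
      have h6 : u.gcd v ≤ u.lcm v := le_trans (Nat.gcd_le_left v hu0) (Nat.le_of_dvd hl0 (Nat.dvd_lcm_left u v))
      have h7 : u * v ≤ u.lcm v * u.lcm v := by
        rw [h5]; exact Nat.mul_le_mul_right _ h6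
      calc ((u * v : ℕ):ℝ) ≤ ((u.lcm v * u.lcm v : ℕ):ℝ) := by exact_mod_cast h7
        _ = ((u.lcm v : ℕ):ℝ)^2 := by push_cast; ring
    calc ((u * v : ℕ):ℝ)^((1:ℝ)/2) * ∑ t ∈ (Icc 1 K).filter (fun t => (M₁.gcd t, M₂.gcd t) = (u, v)), g t
        ≤ ((u.lcm v : ℕ):ℝ) * ∑ t ∈ (Icc 1 K).filter (fun t => u.lcm v ∣ t), g t := by
          apply mul_le_mul hsqrt hmono (Finset.sum_nonneg (fun t _ => hg t)) (by positivity)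
      _ ≤ c := hbd _ hl0
  calc ∑ uv ∈ M₁.divisors ×ˢ M₂.divisors, _ ≤ ∑ _uv ∈ M₁.divisors ×ˢ M₂.divisors, c :=
        Finset.sum_le_sum hpair
    _ = (M₁.divisors.card : ℝ) * (M₂.divisors.card : ℝ) * c := by
        rw [Finset.sum_const, Finset.card_product, nsmul_eq_mul]
        push_cast; ring

noncomputable def fgcd (M₁ M₂ x : ℕ) : ℝ := ((M₁.gcd x * M₂.gcd x : ℕ):ℝ)^((1:ℝ)/2)

lemma mul_rpow_half (a b : ℝ) (ha : 0 ≤ a) (hb : 0 ≤ b) :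
    (a*b)^((1:ℝ)/2) = a^((1:ℝ)/2) * b^((1:ℝ)/2) := Real.mul_rpow ha hb

lemma fgcd_nonneg (M₁ M₂ x : ℕ) : 0 ≤ fgcd M₁ M₂ x :=
  Real.rpow_nonneg (Nat.cast_nonneg _) _

lemma lemG (M₁ M₂ : ℕ) (h₁ : M₁ ≠ 0) (h₂ : M₂ ≠ 0) (K : ℕ) :
    ∑ t ∈ Icc 1 K, fgcd M₁ M₂ t
      ≤ (M₁.divisors.card : ℝ) * (M₂.divisors.card : ℝ) * K := by
  unfold fgcd
  have h := gcd_pair_sum M₁ M₂ h₁ h₂ K (fun _ => 1) (fun _ => zero_le_one) K ?_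
  · simpa using h
  · intro ℓ hℓ
    have hcard : ((Icc 1 K).filter (fun t => ℓ ∣ t)).card = K / ℓ := by
      have hIcc : Icc 1 K = Ioc 0 K := Finset.Icc_add_one_left_eq_Ioc 0 K
      rw [hIcc, Nat.Ioc_filter_dvd_card_eq_div]
    rw [Finset.sum_const, nsmul_eq_mul, mul_one, hcard]
    calc (ℓ:ℝ) * (K / ℓ : ℕ) = ((ℓ * (K / ℓ) : ℕ) : ℝ) := by push_cast; ring
      _ ≤ (K:ℝ) := by exact_mod_cast Nat.mul_div_le K ℓ

lemma lemE (M₁ M₂ : ℕ) (h₁ : M₁ ≠ 0) (h₂ : M₂ ≠ 0) (K : ℕ) :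
    ∑ d ∈ Icc 1 K, fgcd M₁ M₂ d * ((d:ℝ))^(-(3:ℝ)/2)
      ≤ (M₁.divisors.card : ℝ) * (M₂.divisors.card : ℝ) * 3 := by
  unfold fgcd
  apply gcd_pair_sum M₁ M₂ h₁ h₂ K (fun d => ((d:ℝ))^(-(3:ℝ)/2))
    (fun d => Real.rpow_nonneg (Nat.cast_nonneg d) _) 3
  intro ℓ hℓ
  have hℓ0 : (0:ℝ) < (ℓ:ℝ) := by exact_mod_cast hℓ
  have hsub : (Icc 1 K).filter (fun t => ℓ ∣ t) ⊆ (Icc 1 (K/ℓ)).image (fun j => ℓ * j) := by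
    intro t ht
    rw [Finset.mem_filter, Finset.mem_Icc] at ht
    obtain ⟨⟨ht1, ht2⟩, hdvd⟩ := ht
    rw [Finset.mem_image]
    refine ⟨t / ℓ, ?_, Nat.mul_div_cancel' hdvd⟩
    rw [Finset.mem_Icc]
    constructor
    · rw [Nat.one_le_div_iff (by omega)]
      exact Nat.le_of_dvd (by omega) hdvd
    · exact Nat.div_le_div_right ht2
  have hstep : ∑ t ∈ (Icc 1 K).filter (fun t => ℓ ∣ t), ((t:ℝ))^(-(3:ℝ)/2)
      ≤ ∑ j ∈ Icc 1 (K/ℓ), (((ℓ * j : ℕ)):ℝ)^(-(3:ℝ)/2) := by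
    calc ∑ t ∈ (Icc 1 K).filter (fun t => ℓ ∣ t), ((t:ℝ))^(-(3:ℝ)/2)
        ≤ ∑ t ∈ (Icc 1 (K/ℓ)).image (fun j => ℓ * j), ((t:ℝ))^(-(3:ℝ)/2) :=
          Finset.sum_le_sum_of_subset_of_nonneg hsub
            (fun t _ _ => Real.rpow_nonneg (Nat.cast_nonneg t) _)
      _ = ∑ j ∈ Icc 1 (K/ℓ), (((ℓ * j : ℕ)):ℝ)^(-(3:ℝ)/2) :=
          Finset.sum_image (fun x _ y _ h => Nat.eq_of_mul_eq_mul_left (by omega) h)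
  have hsplit : ∑ j ∈ Icc 1 (K/ℓ), (((ℓ * j : ℕ)):ℝ)^(-(3:ℝ)/2)
      = ((ℓ:ℝ))^(-(3:ℝ)/2) * ∑ j ∈ Icc 1 (K/ℓ), ((j:ℝ))^(-(3:ℝ)/2) := by
    rw [Finset.mul_sum]
    apply Finset.sum_congr rfl
    intro j _
    push_cast
    rw [Real.mul_rpow (by positivity) (by positivity)]
  have h3 := sum_rpow_neg_three_halves (K/ℓ)
  have hfin : (ℓ:ℝ) * (((ℓ:ℝ))^(-(3:ℝ)/2) * 3) ≤ 3 := by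
    have e1 : (ℓ:ℝ) * (((ℓ:ℝ))^(-(3:ℝ)/2) * 3) = 3 * ((ℓ:ℝ))^(-(1:ℝ)/2) := by
      rw [show ((ℓ:ℝ)) * (((ℓ:ℝ))^(-(3:ℝ)/2) * 3) = 3 * (((ℓ:ℝ))^(1:ℝ) * ((ℓ:ℝ))^(-(3:ℝ)/2)) by
        rw [Real.rpow_one]; ring]
      rw [← Real.rpow_add hℓ0]
      norm_num
    rw [e1]
    have e2 : ((ℓ:ℝ))^(-(1:ℝ)/2) ≤ 1 := by
      apply Real.rpow_le_one_of_one_le_of_nonpos (by exact_mod_cast hℓ) (by norm_num)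
    linarith
  calc (ℓ:ℝ) * ∑ t ∈ (Icc 1 K).filter (fun t => ℓ ∣ t), ((t:ℝ))^(-(3:ℝ)/2)
      ≤ (ℓ:ℝ) * (((ℓ:ℝ))^(-(3:ℝ)/2) * ∑ j ∈ Icc 1 (K/ℓ), ((j:ℝ))^(-(3:ℝ)/2)) := by
        apply mul_le_mul_of_nonneg_left _ hℓ0.le
        rw [← hsplit]; exact hstep
    _ ≤ (ℓ:ℝ) * (((ℓ:ℝ))^(-(3:ℝ)/2) * 3) := by
        apply mul_le_mul_of_nonneg_left _ hℓ0.le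
        apply mul_le_mul_of_nonneg_left h3 (by positivity)
    _ ≤ 3 := hfin

/-- assuming Stevens' pointwise bound for the level-N GL(3)
long-element Kloosterman sums, the average over moduli D₁ ≤ X₁, D₂ ≤ X₂
divisible by N is ≪_ε (X₁X₂)^{3/2+ε} (m₁n₂m₂n₁)^ε N^{-3/2}. -/
theorem stmt_9 (ε Cε : ℝ) (hε : 0 < ε) (hCε : 0 < Cε) :
    ∃ C : ℝ, 0 < C ∧
      ∀ (N : ℕ), 0 < N → ∀ (m₁ m₂ n₁ n₂ : ℤ),
        m₁ ≠ 0 → m₂ ≠ 0 → n₁ ≠ 0 → n₂ ≠ 0 →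
        Int.gcd (m₁ * m₂ * n₁ * n₂) (N : ℤ) = 1 →
        ∀ (S : ℕ → ℕ → ℂ),
        (∀ D₁ D₂ : ℕ, 0 < D₁ → 0 < D₂ → N ∣ D₁ → N ∣ D₂ →
          ‖S D₁ D₂‖ ≤
            Cε * ((D₁ * D₂ : ℕ) : ℝ) ^ ((1 : ℝ) / 2 + ε) *
              (((Nat.gcd D₁ D₂ : ℕ) : ℝ) * ((Int.gcd (m₁ * n₁) ((Nat.lcm D₁ D₂ : ℕ) : ℤ) : ℕ) : ℝ)
                * ((Int.gcd (m₂ * n₂) ((Nat.lcm D₁ D₂ : ℕ) : ℤ) : ℕ) : ℝ)) ^ ((1 : ℝ) / 2)) →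
        ∀ X₁ X₂ : ℝ, (N : ℝ) ≤ X₁ → (N : ℝ) ≤ X₂ →
          (∑ D₁ ∈ (Finset.Icc 1 ⌊X₁⌋₊).filter (fun D => N ∣ D),
            ∑ D₂ ∈ (Finset.Icc 1 ⌊X₂⌋₊).filter (fun D => N ∣ D),
              ‖S D₁ D₂‖)
            ≤ C * (X₁ * X₂) ^ ((3 : ℝ) / 2 + ε) *
                ((|m₁ * n₂ * m₂ * n₁| : ℤ) : ℝ) ^ ε * (N : ℝ) ^ (-(3 : ℝ) / 2) := by
  obtain ⟨Cτ, hCτ1, hCτ⟩ := tau_bound (ε/3) (by positivity)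
  refine ⟨3 * Cε * Cτ^6, by positivity, ?_⟩
  intro N hN m₁ m₂ n₁ n₂ hm₁ hm₂ hn₁ hn₂ hcop S hS X₁ X₂ hX₁ hX₂
  classical
  have hN1 : (1:ℝ) ≤ (N:ℝ) := by exact_mod_cast hN
  have hX₁1 : (1:ℝ) ≤ X₁ := le_trans hN1 hX₁
  have hX₂1 : (1:ℝ) ≤ X₂ := le_trans hN1 hX₂
  have hX₁0 : (0:ℝ) < X₁ := by linarith
  have hX₂0 : (0:ℝ) < X₂ := by linarith
  -- notation
  set M₁ : ℕ := (m₁ * n₁).natAbs with hM₁def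
  set M₂ : ℕ := (m₂ * n₂).natAbs with hM₂def
  have hM₁ : M₁ ≠ 0 := by simp [hM₁def, Int.natAbs_ne_zero, hm₁, hn₁]
  have hM₂ : M₂ ≠ 0 := by simp [hM₂def, Int.natAbs_ne_zero, hm₂, hn₂]
  set K₁ : ℕ := ⌊X₁⌋₊ / N with hK₁def
  set K₂ : ℕ := ⌊X₂⌋₊ / N with hK₂def
  -- coprimality
  have hbig : Nat.Coprime ((m₁*m₂*n₁*n₂).natAbs) N := by
    simpa [Int.gcd, Int.natAbs_natCast] using hcop
  have hcop1 : Nat.Coprime N M₁ := by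
    have hdvd1 : M₁ ∣ (m₁*m₂*n₁*n₂).natAbs :=
      Int.natAbs_dvd_natAbs.mpr ⟨m₂*n₂, by ring⟩
    exact (Nat.Coprime.coprime_dvd_left hdvd1 hbig).symm
  have hcop2 : Nat.Coprime N M₂ := by
    have hdvd2 : M₂ ∣ (m₁*m₂*n₁*n₂).natAbs :=
      Int.natAbs_dvd_natAbs.mpr ⟨m₁*n₁, by ring⟩
    exact (Nat.Coprime.coprime_dvd_left hdvd2 hbig).symm
  -- index set rewrite
  have hset : ∀ X : ℕ, (Finset.Icc 1 X).filter (fun D => N ∣ D)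
      = (Finset.Icc 1 (X/N)).image (fun δ => N * δ) := by
    intro X
    ext D
    simp only [Finset.mem_filter, Finset.mem_Icc, Finset.mem_image]
    constructor
    · rintro ⟨⟨h1, h2⟩, k, rfl⟩
      have hk0 : k ≠ 0 := by rintro rfl; simp at h1
      exact ⟨k, ⟨Nat.one_le_iff_ne_zero.mpr hk0,
        (Nat.le_div_iff_mul_le hN).mpr (by rw [mul_comm]; exact h2)⟩, rfl⟩
    · rintro ⟨k, ⟨hk1, hk2⟩, rfl⟩
      refine ⟨⟨Nat.one_le_iff_ne_zero.mpr ?_, ?_⟩, ⟨k, rfl⟩⟩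
      · exact Nat.mul_ne_zero hN.ne' (by omega)
      · rw [mul_comm]; exact (Nat.le_div_iff_mul_le hN).mp hk2
  have hinj : ∀ (s : Finset ℕ), ∀ x ∈ s, ∀ y ∈ s, N * x = N * y → x = y :=
    fun s x _ y _ h => Nat.eq_of_mul_eq_mul_left hN h
  rw [hset ⌊X₁⌋₊, Finset.sum_image (hinj _)]
  have hrw2 : ∀ δ₁, (∑ D₂ ∈ (Finset.Icc 1 ⌊X₂⌋₊).filter (fun D => N ∣ D),
      ‖S (N * δ₁) D₂‖) = ∑ δ₂ ∈ Finset.Icc 1 K₂, ‖S (N * δ₁) (N * δ₂)‖ := by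
    intro δ₁; rw [hset ⌊X₂⌋₊, Finset.sum_image (hinj _)]
  rw [Finset.sum_congr rfl (fun δ₁ _ => hrw2 δ₁)]
  -- pointwise bound
  have hDle : ∀ (X : ℝ) (δ K : ℕ), 1 ≤ X → K = ⌊X⌋₊ / N → δ ∈ Finset.Icc 1 K →
      ((N * δ : ℕ) : ℝ) ≤ X := by
    intro X δ K hX1 hK hδ
    rw [Finset.mem_Icc] at hδ
    have h1 : N * δ ≤ N * K := Nat.mul_le_mul_left N hδ.2
    have h2 : N * K ≤ ⌊X⌋₊ := by rw [hK]; exact Nat.mul_div_le ⌊X⌋₊ N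
    calc ((N * δ : ℕ) : ℝ) ≤ (⌊X⌋₊ : ℝ) := by exact_mod_cast le_trans h1 h2
      _ ≤ X := Nat.floor_le (by linarith)
  have hpt : ∀ δ₁ ∈ Finset.Icc 1 K₁, ∀ δ₂ ∈ Finset.Icc 1 K₂,
      ‖S (N * δ₁) (N * δ₂)‖ ≤
        (Cε * (X₁ * X₂) ^ ((1:ℝ)/2 + ε) * (N:ℝ) ^ ((1:ℝ)/2)) *
          (((Nat.gcd δ₁ δ₂ : ℕ):ℝ) ^ ((1:ℝ)/2) * fgcd M₁ M₂ (Nat.gcd δ₁ δ₂) *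
            (fgcd M₁ M₂ (δ₁ / Nat.gcd δ₁ δ₂) * fgcd M₁ M₂ (δ₂ / Nat.gcd δ₁ δ₂))) := by
    intro δ₁ hδ₁ δ₂ hδ₂
    have hδ₁m := Finset.mem_Icc.mp hδ₁
    have hδ₂m := Finset.mem_Icc.mp hδ₂
    have hδ₁0 : 0 < δ₁ := hδ₁m.1
    have hδ₂0 : 0 < δ₂ := hδ₂m.1
    have he0 : 0 < Nat.gcd δ₁ δ₂ := Nat.gcd_pos_of_pos_left δ₂ hδ₁0
    have hbound := hS (N * δ₁) (N * δ₂) (by positivity) (by positivity)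
      ⟨δ₁, rfl⟩ ⟨δ₂, rfl⟩
    -- rewrite gcd and lcm
    have hg : Nat.gcd (N * δ₁) (N * δ₂) = N * Nat.gcd δ₁ δ₂ := Nat.gcd_mul_left N δ₁ δ₂
    have hl : Nat.lcm (N * δ₁) (N * δ₂) = N * Nat.lcm δ₁ δ₂ := Nat.lcm_mul_left N δ₁ δ₂
    have hG1 : (Int.gcd (m₁ * n₁) ((Nat.lcm (N * δ₁) (N * δ₂) : ℕ) : ℤ) : ℕ)
        = M₁.gcd (Nat.lcm δ₁ δ₂) := by
      rw [hl]
      have e1 : Int.gcd (m₁ * n₁) ((N * Nat.lcm δ₁ δ₂ : ℕ) : ℤ)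
          = M₁.gcd (N * Nat.lcm δ₁ δ₂) := by
        simp [Int.gcd, hM₁def, Int.natAbs_mul]
      rw [e1]
      exact Nat.Coprime.gcd_mul_left_cancel_right (Nat.lcm δ₁ δ₂) hcop1
    have hG2 : (Int.gcd (m₂ * n₂) ((Nat.lcm (N * δ₁) (N * δ₂) : ℕ) : ℤ) : ℕ)
        = M₂.gcd (Nat.lcm δ₁ δ₂) := by
      rw [hl]
      have e1 : Int.gcd (m₂ * n₂) ((N * Nat.lcm δ₁ δ₂ : ℕ) : ℤ)
          = M₂.gcd (N * Nat.lcm δ₁ δ₂) := by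
        simp [Int.gcd, hM₂def, Int.natAbs_mul]
      rw [e1]
      exact Nat.Coprime.gcd_mul_left_cancel_right (Nat.lcm δ₁ δ₂) hcop2
    rw [hg, hG1, hG2] at hbound
    have hM₁pos : 0 < M₁ := Nat.pos_of_ne_zero hM₁
    have hM₂pos : 0 < M₂ := Nat.pos_of_ne_zero hM₂
    have het₁ : Nat.gcd δ₁ δ₂ * (δ₁ / Nat.gcd δ₁ δ₂) = δ₁ :=
      Nat.mul_div_cancel' (Nat.gcd_dvd_left δ₁ δ₂)
    have het₂ : Nat.gcd δ₁ δ₂ * (δ₂ / Nat.gcd δ₁ δ₂) = δ₂ :=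
      Nat.mul_div_cancel' (Nat.gcd_dvd_right δ₁ δ₂)
    have hLe : Nat.lcm δ₁ δ₂ = Nat.gcd δ₁ δ₂ * (δ₁ / Nat.gcd δ₁ δ₂) * (δ₂ / Nat.gcd δ₁ δ₂) := by
      apply Nat.eq_of_mul_eq_mul_left he0
      rw [Nat.gcd_mul_lcm]
      calc δ₁ * δ₂
          = (Nat.gcd δ₁ δ₂ * (δ₁ / Nat.gcd δ₁ δ₂)) * (Nat.gcd δ₁ δ₂ * (δ₂ / Nat.gcd δ₁ δ₂)) := by
            rw [het₁, het₂]
        _ = Nat.gcd δ₁ δ₂ * (Nat.gcd δ₁ δ₂ * (δ₁ / Nat.gcd δ₁ δ₂) * (δ₂ / Nat.gcd δ₁ δ₂)) := by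
            ring
    have hd1 : M₁.gcd (Nat.lcm δ₁ δ₂) ∣
        M₁.gcd (Nat.gcd δ₁ δ₂) * M₁.gcd (δ₁ / Nat.gcd δ₁ δ₂) * M₁.gcd (δ₂ / Nat.gcd δ₁ δ₂) := by
      rw [hLe]
      exact (Nat.gcd_mul_right_dvd_mul_gcd M₁ _ _).trans
        (Nat.mul_dvd_mul (Nat.gcd_mul_right_dvd_mul_gcd M₁ _ _) dvd_rfl)
    have hd2 : M₂.gcd (Nat.lcm δ₁ δ₂) ∣
        M₂.gcd (Nat.gcd δ₁ δ₂) * M₂.gcd (δ₁ / Nat.gcd δ₁ δ₂) * M₂.gcd (δ₂ / Nat.gcd δ₁ δ₂) := by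
      rw [hLe]
      exact (Nat.gcd_mul_right_dvd_mul_gcd M₂ _ _).trans
        (Nat.mul_dvd_mul (Nat.gcd_mul_right_dvd_mul_gcd M₂ _ _) dvd_rfl)
    have hgpos : ∀ (M x : ℕ), 0 < M → 0 < M.gcd x := fun M x hM => Nat.gcd_pos_of_pos_left x hM
    have hle1 : M₁.gcd (Nat.lcm δ₁ δ₂) ≤
        M₁.gcd (Nat.gcd δ₁ δ₂) * M₁.gcd (δ₁ / Nat.gcd δ₁ δ₂) * M₁.gcd (δ₂ / Nat.gcd δ₁ δ₂) :=
      Nat.le_of_dvd (Nat.mul_pos (Nat.mul_pos (hgpos _ _ hM₁pos) (hgpos _ _ hM₁pos)) (hgpos _ _ hM₁pos)) hd1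
    have hle2 : M₂.gcd (Nat.lcm δ₁ δ₂) ≤
        M₂.gcd (Nat.gcd δ₁ δ₂) * M₂.gcd (δ₁ / Nat.gcd δ₁ δ₂) * M₂.gcd (δ₂ / Nat.gcd δ₁ δ₂) :=
      Nat.le_of_dvd (Nat.mul_pos (Nat.mul_pos (hgpos _ _ hM₂pos) (hgpos _ _ hM₂pos)) (hgpos _ _ hM₂pos)) hd2
    have hnat : Nat.gcd δ₁ δ₂ * M₁.gcd (Nat.lcm δ₁ δ₂) * M₂.gcd (Nat.lcm δ₁ δ₂) ≤
        Nat.gcd δ₁ δ₂ * (M₁.gcd (Nat.gcd δ₁ δ₂) * M₂.gcd (Nat.gcd δ₁ δ₂)) *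
          ((M₁.gcd (δ₁ / Nat.gcd δ₁ δ₂) * M₂.gcd (δ₁ / Nat.gcd δ₁ δ₂)) *
            (M₁.gcd (δ₂ / Nat.gcd δ₁ δ₂) * M₂.gcd (δ₂ / Nat.gcd δ₁ δ₂))) := by
      calc Nat.gcd δ₁ δ₂ * M₁.gcd (Nat.lcm δ₁ δ₂) * M₂.gcd (Nat.lcm δ₁ δ₂)
          ≤ Nat.gcd δ₁ δ₂ *
              (M₁.gcd (Nat.gcd δ₁ δ₂) * M₁.gcd (δ₁ / Nat.gcd δ₁ δ₂) * M₁.gcd (δ₂ / Nat.gcd δ₁ δ₂)) *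
              (M₂.gcd (Nat.gcd δ₁ δ₂) * M₂.gcd (δ₁ / Nat.gcd δ₁ δ₂) * M₂.gcd (δ₂ / Nat.gcd δ₁ δ₂)) :=
            Nat.mul_le_mul (Nat.mul_le_mul le_rfl hle1) hle2
        _ = _ := by ring
    -- real comparison of the rpow(1/2) factor
    have hA : ((N * δ₁ * (N * δ₂) : ℕ) : ℝ) ^ ((1:ℝ)/2 + ε) ≤ (X₁ * X₂) ^ ((1:ℝ)/2 + ε) := by
      apply Real.rpow_le_rpow (Nat.cast_nonneg _) _ (by positivity)
      have h1 := hDle X₁ δ₁ K₁ hX₁1 hK₁def hδ₁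
      have h2 := hDle X₂ δ₂ K₂ hX₂1 hK₂def hδ₂
      calc ((N * δ₁ * (N * δ₂) : ℕ) : ℝ) = ((N * δ₁ : ℕ):ℝ) * ((N * δ₂ : ℕ):ℝ) := by push_cast; ring
        _ ≤ X₁ * X₂ := mul_le_mul h1 h2 (Nat.cast_nonneg _) (by linarith)
    have hB : (((N * Nat.gcd δ₁ δ₂ : ℕ) : ℝ) * (M₁.gcd (Nat.lcm δ₁ δ₂) : ℝ) *
          (M₂.gcd (Nat.lcm δ₁ δ₂) : ℝ)) ^ ((1:ℝ)/2) ≤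
        (N:ℝ) ^ ((1:ℝ)/2) *
          (((Nat.gcd δ₁ δ₂ : ℕ):ℝ) ^ ((1:ℝ)/2) * fgcd M₁ M₂ (Nat.gcd δ₁ δ₂) *
            (fgcd M₁ M₂ (δ₁ / Nat.gcd δ₁ δ₂) * fgcd M₁ M₂ (δ₂ / Nat.gcd δ₁ δ₂))) := by
      have e0 : ((N * Nat.gcd δ₁ δ₂ : ℕ) : ℝ) * (M₁.gcd (Nat.lcm δ₁ δ₂) : ℝ) *
          (M₂.gcd (Nat.lcm δ₁ δ₂) : ℝ)
          = (N:ℝ) * ((Nat.gcd δ₁ δ₂ * M₁.gcd (Nat.lcm δ₁ δ₂) * M₂.gcd (Nat.lcm δ₁ δ₂) : ℕ) : ℝ) := by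
        push_cast; ring
      rw [e0, Real.mul_rpow (Nat.cast_nonneg N) (Nat.cast_nonneg _)]
      apply mul_le_mul_of_nonneg_left _ (Real.rpow_nonneg (Nat.cast_nonneg N) _)
      have e1 : ((Nat.gcd δ₁ δ₂ * M₁.gcd (Nat.lcm δ₁ δ₂) * M₂.gcd (Nat.lcm δ₁ δ₂) : ℕ) : ℝ) ^ ((1:ℝ)/2)
          ≤ ((Nat.gcd δ₁ δ₂ * (M₁.gcd (Nat.gcd δ₁ δ₂) * M₂.gcd (Nat.gcd δ₁ δ₂)) *
              ((M₁.gcd (δ₁ / Nat.gcd δ₁ δ₂) * M₂.gcd (δ₁ / Nat.gcd δ₁ δ₂)) *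
                (M₁.gcd (δ₂ / Nat.gcd δ₁ δ₂) * M₂.gcd (δ₂ / Nat.gcd δ₁ δ₂))) : ℕ) : ℝ) ^ ((1:ℝ)/2) :=
        Real.rpow_le_rpow (Nat.cast_nonneg _) (by exact_mod_cast hnat) (by norm_num)
      refine e1.trans (le_of_eq ?_)
      unfold fgcd
      rw [Nat.cast_mul, Nat.cast_mul,
        mul_rpow_half _ _ (by positivity) (by positivity),
        mul_rpow_half _ _ (by positivity) (by positivity)]
      congr 1
      rw [Nat.cast_mul, mul_rpow_half _ _ (by positivity) (by positivity)]
    calc ‖S (N * δ₁) (N * δ₂)‖ ≤ _ := hbound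
      _ ≤ Cε * (X₁ * X₂) ^ ((1:ℝ)/2 + ε) *
          ((N:ℝ) ^ ((1:ℝ)/2) *
            (((Nat.gcd δ₁ δ₂ : ℕ):ℝ) ^ ((1:ℝ)/2) * fgcd M₁ M₂ (Nat.gcd δ₁ δ₂) *
              (fgcd M₁ M₂ (δ₁ / Nat.gcd δ₁ δ₂) * fgcd M₁ M₂ (δ₂ / Nat.gcd δ₁ δ₂)))) := by
        apply mul_le_mul (mul_le_mul_of_nonneg_left hA hCε.le) hB
          (Real.rpow_nonneg (by positivity) _) (by positivity)
      _ = (Cε * (X₁ * X₂) ^ ((1:ℝ)/2 + ε) * (N:ℝ) ^ ((1:ℝ)/2)) *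
          (((Nat.gcd δ₁ δ₂ : ℕ):ℝ) ^ ((1:ℝ)/2) * fgcd M₁ M₂ (Nat.gcd δ₁ δ₂) *
            (fgcd M₁ M₂ (δ₁ / Nat.gcd δ₁ δ₂) * fgcd M₁ M₂ (δ₂ / Nat.gcd δ₁ δ₂))) := by
        ring
  -- abbreviations
  set τ₁ : ℝ := (M₁.divisors.card : ℝ) with hτ₁def
  set τ₂ : ℝ := (M₂.divisors.card : ℝ) with hτ₂def
  have hτ₁0 : 0 ≤ τ₁ := Nat.cast_nonneg _
  have hτ₂0 : 0 ≤ τ₂ := Nat.cast_nonneg _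
  set c0 : ℝ := Cε * (X₁ * X₂) ^ ((1:ℝ)/2 + ε) * (N:ℝ) ^ ((1:ℝ)/2) with hc0def
  have hc00 : 0 ≤ c0 := by positivity
  set W : ℕ × ℕ → ℝ := fun p =>
    ((Nat.gcd p.1 p.2 : ℕ):ℝ) ^ ((1:ℝ)/2) * fgcd M₁ M₂ (Nat.gcd p.1 p.2) *
      (fgcd M₁ M₂ (p.1 / Nat.gcd p.1 p.2) * fgcd M₁ M₂ (p.2 / Nat.gcd p.1 p.2)) with hWdef
  set B : (Σ _ : ℕ, ℕ × ℕ) → ℝ := fun σ =>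
    ((σ.1 : ℕ):ℝ) ^ ((1:ℝ)/2) * fgcd M₁ M₂ σ.1 * (fgcd M₁ M₂ σ.2.1 * fgcd M₁ M₂ σ.2.2)
    with hBdef
  have hB0 : ∀ σ, 0 ≤ B σ := by
    intro σ
    apply mul_nonneg (mul_nonneg (Real.rpow_nonneg (Nat.cast_nonneg _) _) (fgcd_nonneg _ _ _))
      (mul_nonneg (fgcd_nonneg _ _ _) (fgcd_nonneg _ _ _))
  -- step 1 : pointwise
  have hstep1 : (∑ δ₁ ∈ Finset.Icc 1 K₁, ∑ δ₂ ∈ Finset.Icc 1 K₂,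
      ‖S (N * δ₁) (N * δ₂)‖)
      ≤ c0 * ∑ p ∈ (Finset.Icc 1 K₁) ×ˢ (Finset.Icc 1 K₂), W p := by
    calc (∑ δ₁ ∈ Finset.Icc 1 K₁, ∑ δ₂ ∈ Finset.Icc 1 K₂,
        ‖S (N * δ₁) (N * δ₂)‖)
        ≤ ∑ δ₁ ∈ Finset.Icc 1 K₁, ∑ δ₂ ∈ Finset.Icc 1 K₂, c0 * W (δ₁, δ₂) :=
          Finset.sum_le_sum (fun δ₁ h1 => Finset.sum_le_sum (fun δ₂ h2 => hpt δ₁ h1 δ₂ h2))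
      _ = ∑ p ∈ (Finset.Icc 1 K₁) ×ˢ (Finset.Icc 1 K₂), c0 * W p :=
          (Finset.sum_product' (Finset.Icc 1 K₁) (Finset.Icc 1 K₂)
            (fun x y => c0 * W (x, y))).symm
      _ = c0 * ∑ p ∈ (Finset.Icc 1 K₁) ×ˢ (Finset.Icc 1 K₂), W p :=
          (Finset.mul_sum _ _ _).symm
  -- step 2 : reindex by gcd
  set T : Finset (Σ _ : ℕ, ℕ × ℕ) :=
    (Finset.Icc 1 K₁).sigma (fun d => (Finset.Icc 1 (K₁/d)) ×ˢ (Finset.Icc 1 (K₂/d))) with hTdef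
  set φ : ℕ × ℕ → (Σ _ : ℕ, ℕ × ℕ) := fun p =>
    ⟨Nat.gcd p.1 p.2, (p.1 / Nat.gcd p.1 p.2, p.2 / Nat.gcd p.1 p.2)⟩ with hφdef
  have hφinj : ∀ x ∈ (Finset.Icc 1 K₁) ×ˢ (Finset.Icc 1 K₂),
      ∀ y ∈ (Finset.Icc 1 K₁) ×ˢ (Finset.Icc 1 K₂), φ x = φ y → x = y := by
    intro x hx y hy h
    have h1 : x.1 = (φ x).1 * (φ x).2.1 := (Nat.mul_div_cancel' (Nat.gcd_dvd_left _ _)).symm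
    have h2 : x.2 = (φ x).1 * (φ x).2.2 := (Nat.mul_div_cancel' (Nat.gcd_dvd_right _ _)).symm
    have h3 : y.1 = (φ y).1 * (φ y).2.1 := (Nat.mul_div_cancel' (Nat.gcd_dvd_left _ _)).symm
    have h4 : y.2 = (φ y).1 * (φ y).2.2 := (Nat.mul_div_cancel' (Nat.gcd_dvd_right _ _)).symm
    have : x = ((φ x).1 * (φ x).2.1, (φ x).1 * (φ x).2.2) := by
      rw [← h1, ← h2]
    rw [this, h, ← h3, ← h4]
  have hmapsto : ∀ p ∈ (Finset.Icc 1 K₁) ×ˢ (Finset.Icc 1 K₂), φ p ∈ T := by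
    intro p hp
    rw [Finset.mem_product, Finset.mem_Icc, Finset.mem_Icc] at hp
    obtain ⟨⟨ha1, ha2⟩, hb1, hb2⟩ := hp
    have hg0 : 0 < Nat.gcd p.1 p.2 := Nat.gcd_pos_of_pos_left p.2 ha1
    rw [hTdef, Finset.mem_sigma]
    constructor
    · rw [Finset.mem_Icc]
      exact ⟨hg0, le_trans (Nat.le_of_dvd ha1 (Nat.gcd_dvd_left _ _)) ha2⟩
    · rw [Finset.mem_product, Finset.mem_Icc, Finset.mem_Icc]
      refine ⟨⟨?_, Nat.div_le_div_right ha2⟩, ?_, Nat.div_le_div_right hb2⟩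
      · rw [Nat.one_le_div_iff hg0]
        exact Nat.le_of_dvd ha1 (Nat.gcd_dvd_left _ _)
      · rw [Nat.one_le_div_iff hg0]
        exact Nat.le_of_dvd hb1 (Nat.gcd_dvd_right _ _)
  have hstep2 : (∑ p ∈ (Finset.Icc 1 K₁) ×ˢ (Finset.Icc 1 K₂), W p) ≤ ∑ σ ∈ T, B σ := by
    have hWB : ∀ p, W p = B (φ p) := fun p => rfl
    rw [Finset.sum_congr rfl (fun p _ => hWB p), ← Finset.sum_image hφinj]
    apply Finset.sum_le_sum_of_subset_of_nonneg
    · exact Finset.image_subset_iff.mpr hmapsto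
    · intro σ _ _
      exact hB0 σ
  -- step 3 : sigma splitting
  have hstep3 : (∑ σ ∈ T, B σ) = ∑ d ∈ Finset.Icc 1 K₁,
      ((d:ℝ) ^ ((1:ℝ)/2) * fgcd M₁ M₂ d) *
        ((∑ t ∈ Finset.Icc 1 (K₁/d), fgcd M₁ M₂ t) *
          (∑ t ∈ Finset.Icc 1 (K₂/d), fgcd M₁ M₂ t)) := by
    rw [hTdef, Finset.sum_sigma]
    apply Finset.sum_congr rfl
    intro d _
    calc ∑ q ∈ (Finset.Icc 1 (K₁/d)) ×ˢ (Finset.Icc 1 (K₂/d)), B ⟨d, q⟩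
        = ∑ q ∈ (Finset.Icc 1 (K₁/d)) ×ˢ (Finset.Icc 1 (K₂/d)),
            ((d:ℝ) ^ ((1:ℝ)/2) * fgcd M₁ M₂ d) * (fgcd M₁ M₂ q.1 * fgcd M₁ M₂ q.2) := by
          rw [hBdef]
      _ = ((d:ℝ) ^ ((1:ℝ)/2) * fgcd M₁ M₂ d) *
            ∑ q ∈ (Finset.Icc 1 (K₁/d)) ×ˢ (Finset.Icc 1 (K₂/d)),
              (fgcd M₁ M₂ q.1 * fgcd M₁ M₂ q.2) := (Finset.mul_sum _ _ _).symm
      _ = ((d:ℝ) ^ ((1:ℝ)/2) * fgcd M₁ M₂ d) *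
            ((∑ t ∈ Finset.Icc 1 (K₁/d), fgcd M₁ M₂ t) *
              (∑ t ∈ Finset.Icc 1 (K₂/d), fgcd M₁ M₂ t)) := by
          rw [Finset.sum_product' _ _ (fun x y => fgcd M₁ M₂ x * fgcd M₁ M₂ y),
            ← Finset.sum_mul_sum]
  -- step 4 : per-d bound
  have hstep4 : (∑ d ∈ Finset.Icc 1 K₁,
      ((d:ℝ) ^ ((1:ℝ)/2) * fgcd M₁ M₂ d) *
        ((∑ t ∈ Finset.Icc 1 (K₁/d), fgcd M₁ M₂ t) *
          (∑ t ∈ Finset.Icc 1 (K₂/d), fgcd M₁ M₂ t)))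
      ≤ (∑ d ∈ Finset.Icc 1 K₁, fgcd M₁ M₂ d * ((d:ℝ)) ^ (-(3:ℝ)/2)) *
          ((τ₁ * τ₂)^2 * ((K₁:ℝ) * (K₂:ℝ))) := by
    rw [Finset.sum_mul]
    apply Finset.sum_le_sum
    intro d hd
    have hd1 : 1 ≤ d := (Finset.mem_Icc.mp hd).1
    have hd0 : (0:ℝ) < (d:ℝ) := by exact_mod_cast hd1
    have hS1 : (∑ t ∈ Finset.Icc 1 (K₁/d), fgcd M₁ M₂ t) ≤ τ₁ * τ₂ * ((K₁:ℝ)/(d:ℝ)) := by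
      refine (lemG M₁ M₂ hM₁ hM₂ (K₁/d)).trans ?_
      have h' : ((K₁/d : ℕ):ℝ) ≤ (K₁:ℝ)/(d:ℝ) := Nat.cast_div_le
      exact mul_le_mul_of_nonneg_left h' (mul_nonneg hτ₁0 hτ₂0)
    have hS2 : (∑ t ∈ Finset.Icc 1 (K₂/d), fgcd M₁ M₂ t) ≤ τ₁ * τ₂ * ((K₂:ℝ)/(d:ℝ)) := by
      refine (lemG M₁ M₂ hM₁ hM₂ (K₂/d)).trans ?_
      have h' : ((K₂/d : ℕ):ℝ) ≤ (K₂:ℝ)/(d:ℝ) := Nat.cast_div_le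
      exact mul_le_mul_of_nonneg_left h' (mul_nonneg hτ₁0 hτ₂0)
    have hsum1nn : (0:ℝ) ≤ ∑ t ∈ Finset.Icc 1 (K₁/d), fgcd M₁ M₂ t :=
      Finset.sum_nonneg (fun t _ => fgcd_nonneg _ _ _)
    have hsum2nn : (0:ℝ) ≤ ∑ t ∈ Finset.Icc 1 (K₂/d), fgcd M₁ M₂ t :=
      Finset.sum_nonneg (fun t _ => fgcd_nonneg _ _ _)
    have hfd : 0 ≤ fgcd M₁ M₂ d := fgcd_nonneg _ _ _
    calc ((d:ℝ) ^ ((1:ℝ)/2) * fgcd M₁ M₂ d) *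
        ((∑ t ∈ Finset.Icc 1 (K₁/d), fgcd M₁ M₂ t) *
          (∑ t ∈ Finset.Icc 1 (K₂/d), fgcd M₁ M₂ t))
        ≤ ((d:ℝ) ^ ((1:ℝ)/2) * fgcd M₁ M₂ d) *
            ((τ₁ * τ₂ * ((K₁:ℝ)/(d:ℝ))) * (τ₁ * τ₂ * ((K₂:ℝ)/(d:ℝ)))) := by
          apply mul_le_mul_of_nonneg_left _
            (mul_nonneg (Real.rpow_nonneg (Nat.cast_nonneg _) _) hfd)
          exact mul_le_mul hS1 hS2 hsum2nn
            (mul_nonneg (mul_nonneg hτ₁0 hτ₂0) (div_nonneg (Nat.cast_nonneg _) hd0.le))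
      _ = fgcd M₁ M₂ d * ((d:ℝ)) ^ (-(3:ℝ)/2) * ((τ₁ * τ₂)^2 * ((K₁:ℝ) * (K₂:ℝ))) := by
          have hid : ((d:ℝ)) ^ (-(3:ℝ)/2) = (d:ℝ) ^ ((1:ℝ)/2) * ((d:ℝ))⁻¹ * ((d:ℝ))⁻¹ := by
            rw [show (-(3:ℝ)/2) = (1:ℝ)/2 + (-1) + (-1) by norm_num,
              Real.rpow_add hd0, Real.rpow_add hd0, Real.rpow_neg_one]
          rw [hid]
          field_simp
  have hstep5 : (∑ d ∈ Finset.Icc 1 K₁, fgcd M₁ M₂ d * ((d:ℝ)) ^ (-(3:ℝ)/2)) ≤ τ₁ * τ₂ * 3 :=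
    lemE M₁ M₂ hM₁ hM₂ K₁
  have htotal : (∑ δ₁ ∈ Finset.Icc 1 K₁, ∑ δ₂ ∈ Finset.Icc 1 K₂,
      ‖S (N * δ₁) (N * δ₂)‖)
      ≤ c0 * ((τ₁ * τ₂ * 3) * ((τ₁ * τ₂)^2 * ((K₁:ℝ) * (K₂:ℝ)))) := by
    refine hstep1.trans ?_
    apply mul_le_mul_of_nonneg_left _ hc00
    refine hstep2.trans ?_
    rw [hstep3]
    refine hstep4.trans ?_
    exact mul_le_mul_of_nonneg_right hstep5
      (mul_nonneg (pow_nonneg (mul_nonneg hτ₁0 hτ₂0) 2)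
        (mul_nonneg (Nat.cast_nonneg _) (Nat.cast_nonneg _)))
  -- final numeric assembly
  have hNr0 : (0:ℝ) < (N:ℝ) := by exact_mod_cast hN
  have hτb1 : τ₁ ≤ Cτ * (M₁:ℝ) ^ (ε/3) := hCτ M₁ hM₁
  have hτb2 : τ₂ ≤ Cτ * (M₂:ℝ) ^ (ε/3) := hCτ M₂ hM₂
  have hK₁X : ((K₁:ℕ):ℝ) ≤ X₁/(N:ℝ) := by
    calc ((K₁:ℕ):ℝ) ≤ ((⌊X₁⌋₊:ℕ):ℝ)/(N:ℝ) := by rw [hK₁def]; exact Nat.cast_div_le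
      _ ≤ X₁/(N:ℝ) := by gcongr; exact Nat.floor_le hX₁0.le
  have hK₂X : ((K₂:ℕ):ℝ) ≤ X₂/(N:ℝ) := by
    calc ((K₂:ℕ):ℝ) ≤ ((⌊X₂⌋₊:ℕ):ℝ)/(N:ℝ) := by rw [hK₂def]; exact Nat.cast_div_le
      _ ≤ X₂/(N:ℝ) := by gcongr; exact Nat.floor_le hX₂0.le
  have habs : ((|m₁ * n₂ * m₂ * n₁| : ℤ) : ℝ) = ((M₁ * M₂ : ℕ) : ℝ) := by
    rw [show m₁ * n₂ * m₂ * n₁ = (m₁ * n₁) * (m₂ * n₂) from by ring]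
    rw [hM₁def, hM₂def]
    push_cast [Nat.cast_natAbs, abs_mul]
    ring
  have hsplitX : (X₁ * X₂) ^ ((3:ℝ)/2 + ε) = (X₁ * X₂) ^ ((1:ℝ)/2 + ε) * (X₁ * X₂) := by
    rw [show (3:ℝ)/2 + ε = ((1:ℝ)/2 + ε) + 1 from by ring, Real.rpow_add (by positivity),
      Real.rpow_one]
  have hsplitN : ((N:ℝ)) ^ (-(3:ℝ)/2) = (N:ℝ) ^ ((1:ℝ)/2) * ((N:ℝ))⁻¹ * ((N:ℝ))⁻¹ := by
    rw [show (-(3:ℝ)/2) = (1:ℝ)/2 + (-1) + (-1) from by norm_num,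
      Real.rpow_add hNr0, Real.rpow_add hNr0, Real.rpow_neg_one]
  have hsplitM : ((M₁ * M₂ : ℕ) : ℝ) ^ ε = ((M₁:ℝ) ^ (ε/3))^3 * ((M₂:ℝ) ^ (ε/3))^3 := by
    rw [Nat.cast_mul, Real.mul_rpow (Nat.cast_nonneg _) (Nat.cast_nonneg _)]
    congr 1
    · rw [← Real.rpow_natCast ((M₁:ℝ) ^ (ε/3)) 3, ← Real.rpow_mul (Nat.cast_nonneg _)]
      norm_num
    · rw [← Real.rpow_natCast ((M₂:ℝ) ^ (ε/3)) 3, ← Real.rpow_mul (Nat.cast_nonneg _)]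
      norm_num
  calc (∑ δ₁ ∈ Finset.Icc 1 K₁, ∑ δ₂ ∈ Finset.Icc 1 K₂,
      ‖S (N * δ₁) (N * δ₂)‖)
      ≤ c0 * ((τ₁ * τ₂ * 3) * ((τ₁ * τ₂)^2 * ((K₁:ℝ) * (K₂:ℝ)))) := htotal
    _ ≤ c0 * (((Cτ * (M₁:ℝ) ^ (ε/3)) * (Cτ * (M₂:ℝ) ^ (ε/3)) * 3) *
          (((Cτ * (M₁:ℝ) ^ (ε/3)) * (Cτ * (M₂:ℝ) ^ (ε/3)))^2 * ((X₁/(N:ℝ)) * (X₂/(N:ℝ))))) := by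
        have hCτ0 : (0:ℝ) ≤ Cτ := le_trans zero_le_one hCτ1
        have hA0 : (0:ℝ) ≤ Cτ * (M₁:ℝ) ^ (ε/3) :=
          mul_nonneg hCτ0 (Real.rpow_nonneg (Nat.cast_nonneg _) _)
        have hB0' : (0:ℝ) ≤ Cτ * (M₂:ℝ) ^ (ε/3) :=
          mul_nonneg hCτ0 (Real.rpow_nonneg (Nat.cast_nonneg _) _)
        have comp1 : τ₁ * τ₂ ≤ (Cτ * (M₁:ℝ) ^ (ε/3)) * (Cτ * (M₂:ℝ) ^ (ε/3)) :=
          mul_le_mul hτb1 hτb2 hτ₂0 hA0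
        have comp2 : τ₁ * τ₂ * 3 ≤ ((Cτ * (M₁:ℝ) ^ (ε/3)) * (Cτ * (M₂:ℝ) ^ (ε/3))) * 3 :=
          mul_le_mul_of_nonneg_right comp1 (by norm_num)
        have comp3 : (τ₁ * τ₂)^2 ≤ ((Cτ * (M₁:ℝ) ^ (ε/3)) * (Cτ * (M₂:ℝ) ^ (ε/3)))^2 :=
          pow_le_pow_left₀ (mul_nonneg hτ₁0 hτ₂0) comp1 2
        have comp4 : ((K₁:ℕ):ℝ) * ((K₂:ℕ):ℝ) ≤ (X₁/(N:ℝ)) * (X₂/(N:ℝ)) :=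
          mul_le_mul hK₁X hK₂X (Nat.cast_nonneg _) (by positivity)
        have comp5 : (τ₁ * τ₂)^2 * (((K₁:ℕ):ℝ) * ((K₂:ℕ):ℝ)) ≤
            ((Cτ * (M₁:ℝ) ^ (ε/3)) * (Cτ * (M₂:ℝ) ^ (ε/3)))^2 * ((X₁/(N:ℝ)) * (X₂/(N:ℝ))) :=
          mul_le_mul comp3 comp4 (mul_nonneg (Nat.cast_nonneg _) (Nat.cast_nonneg _))
            (pow_nonneg (mul_nonneg hA0 hB0') 2)
        have comp6 : (τ₁ * τ₂ * 3) * ((τ₁ * τ₂)^2 * (((K₁:ℕ):ℝ) * ((K₂:ℕ):ℝ))) ≤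
            (((Cτ * (M₁:ℝ) ^ (ε/3)) * (Cτ * (M₂:ℝ) ^ (ε/3))) * 3) *
              (((Cτ * (M₁:ℝ) ^ (ε/3)) * (Cτ * (M₂:ℝ) ^ (ε/3)))^2 * ((X₁/(N:ℝ)) * (X₂/(N:ℝ)))) :=
          mul_le_mul comp2 comp5
            (mul_nonneg (pow_nonneg (mul_nonneg hτ₁0 hτ₂0) 2)
              (mul_nonneg (Nat.cast_nonneg _) (Nat.cast_nonneg _)))
            (mul_nonneg (mul_nonneg hA0 hB0') (by norm_num))
        exact mul_le_mul_of_nonneg_left comp6 hc00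
    _ = 3 * Cε * Cτ^6 * (X₁ * X₂) ^ ((3:ℝ)/2 + ε) * ((M₁ * M₂ : ℕ) : ℝ) ^ ε *
          ((N:ℝ)) ^ (-(3:ℝ)/2) := by
        rw [hc0def, hsplitX, hsplitN, hsplitM]
        field_simp
    _ = 3 * Cε * Cτ^6 * (X₁ * X₂) ^ ((3:ℝ)/2 + ε) * ((|m₁ * n₂ * m₂ * n₁| : ℤ) : ℝ) ^ ε *
          ((N:ℝ)) ^ (-(3:ℝ)/2) := by rw [habs]
end

section
/- For real numbers Ξ₁, Ξ₂ ≥ 1, the Lebesgue measure of the set of (x₁, x₂, x₃) ∈ R³ satisfying (x₁x₂ − x₃)² + x₁² + 1 ≍ Ξ₁ and x₃² + x₂² + 1 ≍ Ξ₂ (i.e., each quantity lies between c·Ξᵢ and C·Ξᵢ for fixed constants 0 < c < C) is ≪_{ε,c,C} (Ξ₁Ξ₂)^{1/2+ε} for every ε > 0. -/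
open MeasureTheory Set

lemma my_slice1 (A B t z : ℝ) (ht : t ≠ 0) :
    volume {y : ℝ | |y| ≤ B ∧ |t * y - z| ≤ A} ≤ ENNReal.ofReal (2 * min B (A / |t|)) := by
  have ht' : 0 < |t| := abs_pos.mpr ht
  have h1 : {y : ℝ | |y| ≤ B ∧ |t * y - z| ≤ A} ⊆ Icc (-B) B := by
    intro y hy
    exact abs_le.mp hy.1
  have h2 : {y : ℝ | |y| ≤ B ∧ |t * y - z| ≤ A} ⊆ Icc (z/t - A/|t|) (z/t + A/|t|) := by
    intro y hy
    have hyz : |y - z/t| ≤ A / |t| := by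
      have e : y - z/t = (t*y - z)/t := by field_simp
      rw [e, abs_div]
      gcongr
      exact hy.2
    have := abs_le.mp hyz
    constructor <;> linarith [this.1, this.2]
  rcases min_cases B (A/|t|) with ⟨hm, _⟩ | ⟨hm, _⟩
  · calc volume {y : ℝ | |y| ≤ B ∧ |t * y - z| ≤ A} ≤ volume (Icc (-B) B) := measure_mono h1
      _ = ENNReal.ofReal (2 * min B (A/|t|)) := by rw [Real.volume_Icc, hm]; ring_nf
  · calc volume {y : ℝ | |y| ≤ B ∧ |t * y - z| ≤ A}
        ≤ volume (Icc (z/t - A/|t|) (z/t + A/|t|)) := measure_mono h2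
      _ = ENNReal.ofReal (2 * min B (A/|t|)) := by rw [Real.volume_Icc, hm]; ring_nf

lemma my_J (A γ : ℝ) (hA : 0 ≤ A) (hγ : 0 < γ) :
    ∫⁻ t in Icc (-A) A, ENNReal.ofReal (|t| ^ (γ - 1)) ≤ ENNReal.ofReal (2 * (A ^ γ / γ)) := by
  have hmeas : Measurable fun t : ℝ => ENNReal.ofReal (|t| ^ (γ - 1)) := by fun_prop
  have hsplit : Icc (-A) A = Icc (-A) 0 ∪ Ioc 0 A := by
    rw [Icc_union_Ioc_eq_Icc (by linarith) hA]
  have hpos : ∫⁻ t in Ioc 0 A, ENNReal.ofReal (|t| ^ (γ - 1))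
      = ENNReal.ofReal (A ^ γ / γ) := by
    have hcong : ∫⁻ t in Ioc 0 A, ENNReal.ofReal (|t| ^ (γ - 1))
        = ∫⁻ t in Ioc 0 A, ENNReal.ofReal (t ^ (γ - 1)) := by
      apply setLIntegral_congr_fun measurableSet_Ioc
      intro t ht; dsimp only
      rw [abs_of_pos ht.1]
    rw [hcong]
    have hint : IntegrableOn (fun t : ℝ => t ^ (γ - 1)) (Ioc 0 A) := by
      have := intervalIntegral.intervalIntegrable_rpow' (a := 0) (b := A) (r := γ - 1)
        (by linarith)
      rwa [intervalIntegrable_iff_integrableOn_Ioc_of_le hA] at this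
    rw [← MeasureTheory.ofReal_integral_eq_lintegral_ofReal hint]
    · congr 1
      have : ∫ t in Ioc 0 A, t ^ (γ - 1) = ∫ t in (0:ℝ)..A, t ^ (γ - 1) := by
        rw [intervalIntegral.integral_of_le hA]
      rw [this, integral_rpow (Or.inl (by linarith))]
      rw [Real.zero_rpow (by linarith), sub_add_cancel]
      ring_nf
    · filter_upwards [ae_restrict_mem measurableSet_Ioc] with t ht
      exact Real.rpow_nonneg ht.1.le _
  have hneg : ∫⁻ t in Icc (-A) 0, ENNReal.ofReal (|t| ^ (γ - 1))
      ≤ ENNReal.ofReal (A ^ γ / γ) := by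
    have key : ∫⁻ t in Icc (-A) 0, ENNReal.ofReal (|t| ^ (γ - 1))
        = ∫⁻ t in Icc 0 A, ENNReal.ofReal (|t| ^ (γ - 1)) := by
      have : ∀ t : ℝ, (Icc (-A) 0).indicator (fun t => ENNReal.ofReal (|t| ^ (γ - 1))) t
          = (Icc 0 A).indicator (fun t => ENNReal.ofReal (|t| ^ (γ - 1))) (-t) := by
        intro t
        by_cases h : t ∈ Icc (-A) 0
        · rw [indicator_of_mem h,
            indicator_of_mem (by constructor <;> [linarith [h.2]; linarith [h.1]]), abs_neg]
        · rw [indicator_of_notMem h, indicator_of_notMem (by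
            intro hc
            exact h ⟨by linarith [hc.2], by linarith [hc.1]⟩)]
      rw [← lintegral_indicator measurableSet_Icc _, ← lintegral_indicator measurableSet_Icc _]
      simp_rw [this]
      have hm : Measurable fun t : ℝ =>
          (Icc 0 A).indicator (fun t => ENNReal.ofReal (|t| ^ (γ - 1))) t :=
        hmeas.indicator measurableSet_Icc
      calc ∫⁻ t, (Icc 0 A).indicator (fun t => ENNReal.ofReal (|t| ^ (γ - 1))) (-t)
          = ∫⁻ t, (Icc 0 A).indicator (fun t => ENNReal.ofReal (|t| ^ (γ - 1))) t
              ∂(Measure.map Neg.neg volume) := by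
            rw [lintegral_map hm measurable_neg]
        _ = _ := by rw [Measure.map_neg_eq_self]
    rw [key]
    have : ∫⁻ t in Icc 0 A, ENNReal.ofReal (|t| ^ (γ - 1))
        = ∫⁻ t in Ioc 0 A, ENNReal.ofReal (|t| ^ (γ - 1)) := by
      apply setLIntegral_congr
      exact (Ioc_ae_eq_Icc (α := ℝ)).symm
    rw [this, hpos]
  calc ∫⁻ t in Icc (-A) A, ENNReal.ofReal (|t| ^ (γ - 1))
      ≤ (∫⁻ t in Icc (-A) 0, ENNReal.ofReal (|t| ^ (γ - 1)))
        + ∫⁻ t in Ioc 0 A, ENNReal.ofReal (|t| ^ (γ - 1)) := by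
        rw [hsplit]
        exact lintegral_union_le _ _ _
    _ ≤ ENNReal.ofReal (A ^ γ / γ) + ENNReal.ofReal (A ^ γ / γ) := by
        rw [hpos]; exact add_le_add_left hneg _
    _ = ENNReal.ofReal (2 * (A ^ γ / γ)) := by
        rw [← ENNReal.ofReal_add (by positivity) (by positivity)]; ring_nf

/-- the volume of the region where (x₁x₂−x₃)² + x₁² + 1 ≍ Ξ₁ and
x₃² + x₂² + 1 ≍ Ξ₂ is ≪_{ε,c,C} (Ξ₁Ξ₂)^{1/2+ε}. -/
theorem stmt_10 (ε c C : ℝ) (hε : 0 < ε) (hc : 0 < c) (hcC : c < C) :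
    ∃ K : ℝ, 0 < K ∧ ∀ Ξ₁ Ξ₂ : ℝ, 1 ≤ Ξ₁ → 1 ≤ Ξ₂ →
      MeasureTheory.volume {x : ℝ × ℝ × ℝ |
          c * Ξ₁ ≤ (x.1 * x.2.1 - x.2.2) ^ 2 + x.1 ^ 2 + 1 ∧
          (x.1 * x.2.1 - x.2.2) ^ 2 + x.1 ^ 2 + 1 ≤ C * Ξ₁ ∧
          c * Ξ₂ ≤ x.2.2 ^ 2 + x.2.1 ^ 2 + 1 ∧
          x.2.2 ^ 2 + x.2.1 ^ 2 + 1 ≤ C * Ξ₂}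
        ≤ ENNReal.ofReal (K * (Ξ₁ * Ξ₂) ^ ((1 : ℝ) / 2 + ε)) := by
  have hC : 0 < C := hc.trans hcC
  set γ := min ε (1/2 : ℝ) with hγdef
  have hγ : 0 < γ := lt_min hε (by norm_num)
  have hγ1 : γ < 1 := (min_le_right _ _).trans_lt (by norm_num)
  have hγε : γ ≤ ε := min_le_left _ _
  refine ⟨8/γ * (max C 1) ^ (2:ℝ), by positivity, ?_⟩
  intro Ξ₁ Ξ₂ hΞ₁ hΞ₂
  set A := Real.sqrt (C*Ξ₁) with hAdef
  set B := Real.sqrt (C*Ξ₂) with hBdef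
  have hA : 0 < A := Real.sqrt_pos.mpr (by positivity)
  have hB : 0 < B := Real.sqrt_pos.mpr (by positivity)
  set S' : Set (ℝ×ℝ×ℝ) :=
    {x | |x.1| ≤ A ∧ |x.2.1| ≤ B ∧ |x.2.2| ≤ B ∧ |x.1*x.2.1 - x.2.2| ≤ A} with hS'def
  have hS'meas : MeasurableSet S' := by
    rw [hS'def]
    simp only [setOf_and]
    refine MeasurableSet.inter ?_ (MeasurableSet.inter ?_ (MeasurableSet.inter ?_ ?_)) <;>
      exact measurableSet_le (by fun_prop) measurable_const
  have habs : ∀ u v : ℝ, u^2 ≤ v → |u| ≤ Real.sqrt v := by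
    intro u v h
    rw [← Real.sqrt_sq_eq_abs]
    exact Real.sqrt_le_sqrt h
  have hsub : {x : ℝ × ℝ × ℝ |
          c * Ξ₁ ≤ (x.1 * x.2.1 - x.2.2) ^ 2 + x.1 ^ 2 + 1 ∧
          (x.1 * x.2.1 - x.2.2) ^ 2 + x.1 ^ 2 + 1 ≤ C * Ξ₁ ∧
          c * Ξ₂ ≤ x.2.2 ^ 2 + x.2.1 ^ 2 + 1 ∧
          x.2.2 ^ 2 + x.2.1 ^ 2 + 1 ≤ C * Ξ₂} ⊆ S' := by
    intro x hx
    obtain ⟨-, h1, -, h2⟩ := hx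
    have s1 : x.1^2 ≤ C*Ξ₁ := by nlinarith [sq_nonneg (x.1*x.2.1 - x.2.2)]
    have s2 : (x.1*x.2.1 - x.2.2)^2 ≤ C*Ξ₁ := by nlinarith [sq_nonneg x.1]
    have s3 : x.2.1^2 ≤ C*Ξ₂ := by nlinarith [sq_nonneg x.2.2]
    have s4 : x.2.2^2 ≤ C*Ξ₂ := by nlinarith [sq_nonneg x.2.1]
    exact ⟨habs _ _ s1, habs _ _ s3, habs _ _ s4, habs _ _ s2⟩
  -- bound the volume of S'
  have hsec : ∀ t : ℝ, t ≠ 0 → (volume : Measure (ℝ × ℝ)) (Prod.mk t ⁻¹' S')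
      ≤ (Icc (-A) A).indicator
          (fun t => ENNReal.ofReal (4 * (B^(1+γ) * A^(1-γ)))
            * ENNReal.ofReal (|t|^(γ-1))) t := by
    intro t ht
    by_cases htA : t ∈ Icc (-A) A
    · rw [indicator_of_mem htA]
      have hTmeas : MeasurableSet (Prod.mk t ⁻¹' S') :=
        measurable_prodMk_left hS'meas
      rw [Measure.volume_eq_prod, Measure.prod_apply_symm hTmeas]
      have hinner : ∀ z : ℝ, (volume : Measure ℝ) ((fun y => (y, z)) ⁻¹' (Prod.mk t ⁻¹' S'))
          ≤ (Icc (-B) B).indicator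
              (fun _ => ENNReal.ofReal (2 * (B^γ * (A^(1-γ) * |t|^(γ-1))))) z := by
        intro z
        by_cases hz : z ∈ Icc (-B) B
        · rw [indicator_of_mem hz]
          have hss : ((fun y => (y, z)) ⁻¹' (Prod.mk t ⁻¹' S'))
              ⊆ {y : ℝ | |y| ≤ B ∧ |t * y - z| ≤ A} := by
            intro y hy
            exact ⟨hy.2.1, hy.2.2.2⟩
          calc (volume : Measure ℝ) ((fun y => (y, z)) ⁻¹' (Prod.mk t ⁻¹' S'))
              ≤ volume {y : ℝ | |y| ≤ B ∧ |t * y - z| ≤ A} := measure_mono hss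
            _ ≤ ENNReal.ofReal (2 * min B (A / |t|)) := my_slice1 A B t z ht
            _ ≤ ENNReal.ofReal (2 * (B^γ * (A^(1-γ) * |t|^(γ-1)))) := by
                apply ENNReal.ofReal_le_ofReal
                have ht' : 0 < |t| := abs_pos.mpr ht
                have hm : 0 < min B (A/|t|) := lt_min hB (by positivity)
                have e1 : min B (A/|t|) = (min B (A/|t|))^γ * (min B (A/|t|))^(1-γ) := by
                  rw [← Real.rpow_add hm]
                  norm_num
                have e2 : (A/|t|)^(1-γ) = A^(1-γ) * |t|^(γ-1) := by
                  rw [Real.div_rpow hA.le (abs_nonneg t), div_eq_mul_inv,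
                    ← Real.rpow_neg (abs_nonneg t), neg_sub]
                calc 2 * min B (A/|t|)
                    = 2 * ((min B (A/|t|))^γ * (min B (A/|t|))^(1-γ)) := by rw [← e1]
                  _ ≤ 2 * (B^γ * (A/|t|)^(1-γ)) := by
                      have g1 : (min B (A/|t|))^γ ≤ B^γ :=
                        Real.rpow_le_rpow hm.le (min_le_left _ _) hγ.le
                      have g2 : (min B (A/|t|))^(1-γ:ℝ) ≤ (A/|t|)^(1-γ:ℝ) :=
                        Real.rpow_le_rpow hm.le (min_le_right _ _) (by linarith)
                      have := mul_le_mul g1 g2 (Real.rpow_nonneg hm.le _)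
                        (Real.rpow_nonneg hB.le _)
                      linarith
                  _ = 2 * (B^γ * (A^(1-γ) * |t|^(γ-1))) := by rw [e2]
        · rw [indicator_of_notMem hz]
          refine le_of_eq ?_
          rw [← measure_empty (μ := (volume : Measure ℝ))]
          congr 1
          ext y
          simp only [mem_preimage, mem_empty_iff_false, iff_false]
          intro hy
          exact hz (abs_le.mp hy.2.2.1)
      calc ∫⁻ z, (volume : Measure ℝ) ((fun y => (y, z)) ⁻¹' (Prod.mk t ⁻¹' S'))
          ≤ ∫⁻ z, (Icc (-B) B).indicator
              (fun _ => ENNReal.ofReal (2 * (B^γ * (A^(1-γ) * |t|^(γ-1))))) z :=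
            lintegral_mono hinner
        _ = ENNReal.ofReal (2 * (B^γ * (A^(1-γ) * |t|^(γ-1)))) * ENNReal.ofReal (2*B) := by
            rw [lintegral_indicator measurableSet_Icc _, setLIntegral_const, Real.volume_Icc,
              show B - -B = 2*B by ring]
        _ = ENNReal.ofReal (4 * (B^(1+γ) * A^(1-γ))) * ENNReal.ofReal (|t|^(γ-1)) := by
            rw [← ENNReal.ofReal_mul (by positivity), ← ENNReal.ofReal_mul (by positivity)]
            congr 1
            have : B^(1+γ:ℝ) = B * B^γ := by
              rw [Real.rpow_add hB, Real.rpow_one]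
            rw [this]
            ring
    · rw [indicator_of_notMem htA]
      refine le_of_eq ?_
      rw [← measure_empty (μ := (volume : Measure (ℝ × ℝ)))]
      congr 1
      ext p
      simp only [mem_preimage, mem_empty_iff_false, iff_false]
      intro hp
      exact htA (abs_le.mp hp.1)
  have hvol : volume S' ≤ ENNReal.ofReal (8/γ * (B^(1+γ) * A)) := by
    rw [Measure.volume_eq_prod, Measure.prod_apply hS'meas]
    have hae : ∀ᵐ t : ℝ, (volume : Measure (ℝ × ℝ)) (Prod.mk t ⁻¹' S')
        ≤ (Icc (-A) A).indicator
            (fun t => ENNReal.ofReal (4 * (B^(1+γ) * A^(1-γ)))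
              * ENNReal.ofReal (|t|^(γ-1))) t := by
      have h0 : ∀ᵐ t : ℝ, t ≠ (0:ℝ) := by
        rw [ae_iff]
        simp only [ne_eq, not_not, setOf_eq_eq_singleton]
        exact Real.volume_singleton
      filter_upwards [h0] with t ht
      exact hsec t ht
    calc ∫⁻ t, (volume : Measure (ℝ × ℝ)) (Prod.mk t ⁻¹' S')
        ≤ ∫⁻ t, (Icc (-A) A).indicator
            (fun t => ENNReal.ofReal (4 * (B^(1+γ) * A^(1-γ)))
              * ENNReal.ofReal (|t|^(γ-1))) t := lintegral_mono_ae hae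
      _ = ENNReal.ofReal (4 * (B^(1+γ) * A^(1-γ)))
            * ∫⁻ t in Icc (-A) A, ENNReal.ofReal (|t|^(γ-1)) := by
          rw [lintegral_indicator measurableSet_Icc _]
          rw [lintegral_const_mul]
          fun_prop
      _ ≤ ENNReal.ofReal (4 * (B^(1+γ) * A^(1-γ))) * ENNReal.ofReal (2 * (A^γ/γ)) :=
          mul_le_mul_right (my_J A γ hA.le hγ) _
      _ = ENNReal.ofReal (8/γ * (B^(1+γ) * A)) := by
          rw [← ENNReal.ofReal_mul (by positivity)]
          congr 1
          have hAe : A^(1-γ:ℝ) * A^(γ:ℝ) = A := by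
            rw [← Real.rpow_add hA]
            norm_num
          calc 4 * (B^(1+γ:ℝ) * A^(1-γ:ℝ)) * (2 * (A^γ/γ))
              = 8/γ * (B^(1+γ:ℝ) * (A^(1-γ:ℝ) * A^γ)) := by ring
            _ = 8/γ * (B^(1+γ:ℝ) * A) := by rw [hAe]
  -- final arithmetic
  have harith : 8/γ * (B^(1+γ) * A) ≤ (8/γ * (max C 1) ^ (2:ℝ)) * (Ξ₁*Ξ₂)^((1:ℝ)/2+ε) := by
    have hBe : B^(1+γ:ℝ) = C^((1+γ)/2:ℝ) * Ξ₂^((1+γ)/2:ℝ) := by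
      rw [hBdef, Real.sqrt_eq_rpow, ← Real.rpow_mul (by positivity),
        show (1/2) * (1+γ) = (1+γ)/2 by ring, Real.mul_rpow hC.le (by linarith)]
    have hAe : A = C^((1:ℝ)/2) * Ξ₁^((1:ℝ)/2) := by
      rw [hAdef, Real.sqrt_eq_rpow, Real.mul_rpow hC.le (by linarith)]
    rw [hBe, hAe]
    have hCle : C^((1+γ)/2:ℝ) * C^((1:ℝ)/2) ≤ (max C 1) ^ (2:ℝ) := by
      rw [← Real.rpow_add hC]
      calc C ^ ((1+γ)/2 + 1/2 : ℝ) ≤ (max C 1) ^ ((1+γ)/2 + 1/2 : ℝ) :=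
            Real.rpow_le_rpow hC.le (le_max_left _ _) (by linarith)
        _ ≤ (max C 1) ^ (2:ℝ) :=
            Real.rpow_le_rpow_of_exponent_le (le_max_right _ _) (by linarith)
    have hΞ2le : Ξ₂^((1+γ)/2:ℝ) ≤ Ξ₂^((1:ℝ)/2+ε) :=
      Real.rpow_le_rpow_of_exponent_le hΞ₂ (by linarith)
    have hΞ1le : Ξ₁^((1:ℝ)/2) ≤ Ξ₁^((1:ℝ)/2+ε) :=
      Real.rpow_le_rpow_of_exponent_le hΞ₁ (by linarith)
    have hmul : (Ξ₁*Ξ₂)^((1:ℝ)/2+ε) = Ξ₁^((1:ℝ)/2+ε) * Ξ₂^((1:ℝ)/2+ε) :=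
      Real.mul_rpow (by linarith) (by linarith)
    rw [hmul]
    have e1 : (0:ℝ) ≤ Ξ₂^((1+γ)/2:ℝ) := Real.rpow_nonneg (by linarith) _
    have e2 : (0:ℝ) ≤ Ξ₁^((1:ℝ)/2) := Real.rpow_nonneg (by linarith) _
    have e3 : (0:ℝ) ≤ C^((1+γ)/2:ℝ) := Real.rpow_nonneg hC.le _
    have e4 : (0:ℝ) ≤ C^((1:ℝ)/2) := Real.rpow_nonneg hC.le _
    have e5 : (0:ℝ) ≤ Ξ₁^((1:ℝ)/2+ε) := Real.rpow_nonneg (by linarith) _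
    have e6 : (0:ℝ) ≤ Ξ₂^((1:ℝ)/2+ε) := Real.rpow_nonneg (by linarith) _
    have key : (C^((1+γ)/2:ℝ) * Ξ₂^((1+γ)/2:ℝ)) * (C^((1:ℝ)/2) * Ξ₁^((1:ℝ)/2))
        ≤ (max C 1) ^ (2:ℝ) * (Ξ₁^((1:ℝ)/2+ε) * Ξ₂^((1:ℝ)/2+ε)) := by
      calc (C^((1+γ)/2:ℝ) * Ξ₂^((1+γ)/2:ℝ)) * (C^((1:ℝ)/2) * Ξ₁^((1:ℝ)/2))
          = (C^((1+γ)/2:ℝ) * C^((1:ℝ)/2)) * (Ξ₁^((1:ℝ)/2) * Ξ₂^((1+γ)/2:ℝ)) := by ring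
        _ ≤ (max C 1) ^ (2:ℝ) * (Ξ₁^((1:ℝ)/2+ε) * Ξ₂^((1:ℝ)/2+ε)) := by
            apply mul_le_mul hCle (mul_le_mul hΞ1le hΞ2le e1 e5) (by positivity)
            positivity
    calc 8/γ * (C^((1+γ)/2:ℝ) * Ξ₂^((1+γ)/2:ℝ) * (C^((1:ℝ)/2) * Ξ₁^((1:ℝ)/2)))
        ≤ 8/γ * ((max C 1) ^ (2:ℝ) * (Ξ₁^((1:ℝ)/2+ε) * Ξ₂^((1:ℝ)/2+ε))) := by
          apply mul_le_mul_of_nonneg_left key (by positivity)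
      _ = 8/γ * (max C 1) ^ (2:ℝ) * (Ξ₁^((1:ℝ)/2+ε) * Ξ₂^((1:ℝ)/2+ε)) := by ring
  calc volume _ ≤ volume S' := measure_mono hsub
    _ ≤ ENNReal.ofReal (8/γ * (B^(1+γ) * A)) := hvol
    _ ≤ ENNReal.ofReal ((8/γ * (max C 1) ^ (2:ℝ)) * (Ξ₁*Ξ₂)^((1:ℝ)/2+ε)) :=
        ENNReal.ofReal_le_ofReal harith
end

section
/- Let N ∈ ℕ, δ > 0, p a prime not dividing N, and π a cuspidal automorphic representation with Hecke eigenvalues λ_π(p^l) = A_ϖ(p^l, 1). Assume the mean value bound Σ_{π, μ_π ∈ Ω} |A_ϖ(p^l,1)|^{2k} ≤ C(ε)(Np^{2lk})^ε ((l+1)(l+2)/2)^{2k} (N² + N^{1/2}p^{2kl})^{1/2} N^{1/2}·N^{1/2} for all k ≥ 1 (derived from the Hecke relations and the spectral second moment bound), and that ‖α_π(p)‖ ≥ 1+δ implies λ_π(p^l) ≥ (l+1)(l+2) for some l = l(δ). Then with k = ⌊3 log N/(4l log p)⌋ ≥ 1, the count #{π : μ_π ∈ Ω, ‖α_π(p)‖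 ≥ 1+δ} ≪ N^{2+ε−(3 log 2)/(2l log p)}; in particular there exists η > 0 with the count ≪ (N²)^{1−η}. -/
/-- density of forms violating the Ramanujan conjecture at p —
from the Chebyshev-type lower bound λ_π(p^l) ≥ (l+1)(l+2) on the exceptional
forms and the spectral moment bound, the count of exceptional forms is
≪ N^{2+ε−(3 log 2)/(2 l log p)} (optimizing at k = ⌊3 log N/(4 l log p)⌋ ≥ 1). -/
theorem stmt_17 (ε Cε : ℝ) (hε : 0 < ε) (hCε : 0 < Cε) (p l : ℕ)
    (hp : p.Prime) (hl : 1 ≤ l) :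
    ∃ C : ℝ, 0 < C ∧ ∀ (N : ℕ), 2 ≤ N →
      1 ≤ ⌊(3 * Real.log N) / (4 * l * Real.log p)⌋₊ →
      ∀ (ι : Type) (F : Finset ι) (A : ι → ℝ),
      (∀ π ∈ F, (((l : ℝ) + 1) * ((l : ℝ) + 2)) ≤ A π) →
      (∀ k : ℕ, 1 ≤ k →
        ∑ π ∈ F, (A π) ^ (2 * k) ≤
          Cε * ((N : ℝ) * (p : ℝ) ^ (2 * l * k)) ^ (ε / 4) *
            ((((l : ℝ) + 1) * ((l : ℝ) + 2) / 2) ^ (2 * k)) *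
            ((N : ℝ) ^ 2 + (N : ℝ) ^ ((1 : ℝ) / 2) * (p : ℝ) ^ (2 * k * l)) ^ ((1 : ℝ) / 2) *
            (N : ℝ)) →
      (F.card : ℝ) ≤ C * (N : ℝ) ^ (2 + ε - (3 * Real.log 2) / (2 * l * Real.log p)) := by
  refine ⟨4 * Real.sqrt 2 * Cε, by positivity, ?_⟩
  intro N hN hk1 ι F A hA hmom
  set k := ⌊(3 * Real.log N) / (4 * l * Real.log p)⌋₊ with hk_def
  set c := (3 * Real.log 2) / (2 * l * Real.log p) with hc_def
  have hn2 : (2:ℝ) ≤ (N:ℝ) := by exact_mod_cast hN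
  have hn0 : (0:ℝ) < (N:ℝ) := by linarith
  have hn1 : (1:ℝ) ≤ (N:ℝ) := by linarith
  have hP2 : (2:ℝ) ≤ (p:ℝ) := by exact_mod_cast hp.two_le
  have hP0 : (0:ℝ) < (p:ℝ) := by linarith
  have hL : 0 < Real.log p := Real.log_pos (by linarith)
  have hM : 0 < Real.log N := Real.log_pos (by linarith)
  have hl1 : (1:ℝ) ≤ (l:ℝ) := by exact_mod_cast hl
  have hl0 : (0:ℝ) < (l:ℝ) := by linarith
  have hk_le : (k:ℝ) ≤ 3 * Real.log N / (4 * l * Real.log p) :=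
    Nat.floor_le (by positivity)
  have hk_gt : 3 * Real.log N / (4 * l * Real.log p) < (k:ℝ) + 1 :=
    Nat.lt_floor_add_one _
  -- key exponent bounds
  have key : 2 * (l:ℝ) * Real.log p * k ≤ 3/2 * Real.log N := by
    have h1 : 2 * (l:ℝ) * Real.log p * k
        ≤ 2 * (l:ℝ) * Real.log p * (3 * Real.log N / (4 * l * Real.log p)) :=
      mul_le_mul_of_nonneg_left hk_le (by positivity)
    have h2 : 2 * (l:ℝ) * Real.log p * (3 * Real.log N / (4 * l * Real.log p))
        = 3/2 * Real.log N := by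
      field_simp
      ring
    linarith
  have key2 : 3 / (2 * l * Real.log p) * Real.log N ≤ 2 * (k:ℝ) + 2 := by
    have h1 : 3 * Real.log N < (4 * (l:ℝ) * Real.log p) * ((k:ℝ) + 1) := by
      have := (div_lt_iff₀ (by positivity : (0:ℝ) < 4 * (l:ℝ) * Real.log p)).mp hk_gt
      linarith
    rw [div_mul_eq_mul_div, div_le_iff₀ (by positivity : (0:ℝ) < 2 * (l:ℝ) * Real.log p)]
    nlinarith [hL, hl0]
  -- p ^ (2*l*k) ≤ N ^ (3/2)
  have hPk : (p:ℝ) ^ (2*l*k) ≤ (N:ℝ) ^ ((3:ℝ)/2) := by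
    rw [← Real.rpow_natCast (p:ℝ) (2*l*k), Real.rpow_def_of_pos hP0,
      Real.rpow_def_of_pos hn0]
    apply Real.exp_le_exp.mpr
    push_cast
    nlinarith [key]
  -- (1/2)^(2k) ≤ 4 * N^(-c)
  have hNc : (0:ℝ) < (N:ℝ) ^ c := Real.rpow_pos_of_pos hn0 c
  have h2k : ((1:ℝ)/2) ^ (2*k) ≤ 4 * (N:ℝ) ^ (-c) := by
    have hb : (N:ℝ) ^ c ≤ 4 * 2 ^ (2*k) := by
      have e1 : (4:ℝ) * 2 ^ (2*k) = 2 ^ (2*k+2) := by rw [pow_add]; ring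
      rw [e1, Real.rpow_def_of_pos hn0,
        ← Real.rpow_natCast (2:ℝ) (2*k+2), Real.rpow_def_of_pos (by norm_num : (0:ℝ) < 2)]
      apply Real.exp_le_exp.mpr
      push_cast
      have hlog2 : 0 < Real.log 2 := Real.log_pos (by norm_num)
      have : c * Real.log N ≤ (2*(k:ℝ)+2) * Real.log 2 := by
        have := mul_le_mul_of_nonneg_right key2 hlog2.le
        rw [hc_def]
        calc 3 * Real.log 2 / (2 * ↑l * Real.log p) * Real.log N
            = (3 / (2 * ↑l * Real.log p) * Real.log N) * Real.log 2 := by ring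
          _ ≤ (2*(k:ℝ)+2) * Real.log 2 :=
              mul_le_mul_of_nonneg_right key2 hlog2.le
      linarith [this]
    have h2pos : (0:ℝ) < (2:ℝ) ^ (2*k) := by positivity
    rw [one_div, inv_pow, Real.rpow_neg hn0.le]
    calc ((2:ℝ) ^ (2*k))⁻¹ ≤ (((N:ℝ) ^ c)/4)⁻¹ := by
          apply inv_anti₀ (by positivity)
          linarith [hb]
      _ = 4 * ((N:ℝ) ^ c)⁻¹ := by
          rw [inv_div]; ring
  -- step 1: card * B^(2k) ≤ moment bound
  set B : ℝ := ((l:ℝ)+1) * ((l:ℝ)+2) with hB_def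
  have hB0 : (0:ℝ) < B := by positivity
  have hcard : (F.card : ℝ) * B ^ (2*k) ≤ ∑ π ∈ F, (A π) ^ (2*k) := by
    have h := Finset.card_nsmul_le_sum F (fun π => (A π) ^ (2*k)) (B ^ (2*k))
      (fun π hπ => pow_le_pow_left₀ hB0.le (hA π hπ) _)
    simpa [nsmul_eq_mul] using h
  have hmomk := hmom k hk1
  -- rearrange RHS to factor out B^(2k)
  have hre : Cε * ((N : ℝ) * (p : ℝ) ^ (2 * l * k)) ^ (ε / 4) *
      ((B / 2) ^ (2 * k)) *
      ((N : ℝ) ^ 2 + (N : ℝ) ^ ((1 : ℝ) / 2) * (p : ℝ) ^ (2 * k * l)) ^ ((1 : ℝ) / 2) *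
      (N : ℝ)
      = (Cε * ((N : ℝ) * (p : ℝ) ^ (2 * l * k)) ^ (ε / 4) * ((1/2:ℝ)) ^ (2*k) *
        ((N : ℝ) ^ 2 + (N : ℝ) ^ ((1 : ℝ) / 2) * (p : ℝ) ^ (2 * k * l)) ^ ((1 : ℝ) / 2) *
        (N : ℝ)) * B ^ (2*k) := by
    rw [div_eq_mul_inv B 2, mul_pow, one_div, inv_pow]
    ring
  have hdiv : (F.card : ℝ) ≤
      Cε * ((N : ℝ) * (p : ℝ) ^ (2 * l * k)) ^ (ε / 4) * ((1/2:ℝ)) ^ (2*k) *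
        ((N : ℝ) ^ 2 + (N : ℝ) ^ ((1 : ℝ) / 2) * (p : ℝ) ^ (2 * k * l)) ^ ((1 : ℝ) / 2) *
        (N : ℝ) := by
    have hBk : (0:ℝ) < B ^ (2*k) := by positivity
    apply le_of_mul_le_mul_right _ hBk
    calc (F.card : ℝ) * B ^ (2*k) ≤ ∑ π ∈ F, (A π) ^ (2*k) := hcard
      _ ≤ _ := hmomk
      _ = _ := hre
  -- bound the three factors
  have hX : ((N:ℝ) * (p:ℝ) ^ (2*l*k)) ^ (ε/4) ≤ (N:ℝ) ^ ε := by
    have h1 : (N:ℝ) * (p:ℝ) ^ (2*l*k) ≤ (N:ℝ) ^ ((5:ℝ)/2) := by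
      calc (N:ℝ) * (p:ℝ) ^ (2*l*k) ≤ (N:ℝ) * (N:ℝ) ^ ((3:ℝ)/2) :=
            mul_le_mul_of_nonneg_left hPk hn0.le
        _ = (N:ℝ) ^ ((5:ℝ)/2) := by
            nth_rewrite 1 [← Real.rpow_one (N:ℝ)]
            rw [← Real.rpow_add hn0]; norm_num
    calc ((N:ℝ) * (p:ℝ) ^ (2*l*k)) ^ (ε/4) ≤ ((N:ℝ) ^ ((5:ℝ)/2)) ^ (ε/4) :=
          Real.rpow_le_rpow (by positivity) h1 (by positivity)
      _ = (N:ℝ) ^ ((5:ℝ)/2 * (ε/4)) := by rw [← Real.rpow_mul hn0.le]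
      _ ≤ (N:ℝ) ^ ε := Real.rpow_le_rpow_of_exponent_le hn1 (by linarith)
  have hY : ((N : ℝ) ^ 2 + (N : ℝ) ^ ((1 : ℝ) / 2) * (p : ℝ) ^ (2 * k * l)) ^ ((1 : ℝ) / 2)
      ≤ Real.sqrt 2 * (N:ℝ) := by
    have h1 : (N:ℝ) ^ ((1:ℝ)/2) * (p:ℝ) ^ (2*k*l) ≤ (N:ℝ) ^ 2 := by
      have e : 2*k*l = 2*l*k := by ring
      rw [e]
      calc (N:ℝ) ^ ((1:ℝ)/2) * (p:ℝ) ^ (2*l*k)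
          ≤ (N:ℝ) ^ ((1:ℝ)/2) * (N:ℝ) ^ ((3:ℝ)/2) :=
            mul_le_mul_of_nonneg_left hPk (by positivity)
        _ = (N:ℝ) ^ 2 := by
            rw [← Real.rpow_add hn0, ← Real.rpow_natCast (N:ℝ) 2]
            norm_num
    calc ((N : ℝ) ^ 2 + (N : ℝ) ^ ((1 : ℝ) / 2) * (p : ℝ) ^ (2 * k * l)) ^ ((1 : ℝ) / 2)
        ≤ (2 * (N:ℝ) ^ 2) ^ ((1:ℝ)/2) := by
          apply Real.rpow_le_rpow (by positivity) (by linarith) (by norm_num)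
      _ = Real.sqrt 2 * (N:ℝ) := by
          rw [Real.mul_rpow (by norm_num) (by positivity),
            ← Real.rpow_natCast (N:ℝ) 2, ← Real.rpow_mul hn0.le]
          norm_num [Real.sqrt_eq_rpow]
  -- combine
  have hfinal : Cε * ((N : ℝ) * (p : ℝ) ^ (2 * l * k)) ^ (ε / 4) * ((1/2:ℝ)) ^ (2*k) *
      ((N : ℝ) ^ 2 + (N : ℝ) ^ ((1 : ℝ) / 2) * (p : ℝ) ^ (2 * k * l)) ^ ((1 : ℝ) / 2) *
      (N : ℝ)
      ≤ 4 * Real.sqrt 2 * Cε * (N:ℝ) ^ (2 + ε - c) := by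
    have hexp : (N:ℝ) ^ (2 + ε - c) = (N:ℝ) ^ ε * (N:ℝ) ^ (-c) * (N:ℝ) ^ 2 := by
      rw [← Real.rpow_natCast (N:ℝ) 2, ← Real.rpow_add hn0, ← Real.rpow_add hn0]
      norm_num
      ring_nf
    calc Cε * ((N : ℝ) * (p : ℝ) ^ (2 * l * k)) ^ (ε / 4) * ((1/2:ℝ)) ^ (2*k) *
        ((N : ℝ) ^ 2 + (N : ℝ) ^ ((1 : ℝ) / 2) * (p : ℝ) ^ (2 * k * l)) ^ ((1 : ℝ) / 2) *
        (N : ℝ)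
        ≤ Cε * ((N:ℝ) ^ ε) * (4 * (N:ℝ) ^ (-c)) * (Real.sqrt 2 * (N:ℝ)) * (N:ℝ) := by
          gcongr
      _ = 4 * Real.sqrt 2 * Cε * ((N:ℝ) ^ ε * (N:ℝ) ^ (-c) * (N:ℝ) ^ 2) := by ring
      _ = 4 * Real.sqrt 2 * Cε * (N:ℝ) ^ (2 + ε - c) := by rw [hexp]
  exact le_trans hdiv hfinal
end
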